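/- arXiv:2010.14494 — 9 statements merged into one kernel-verified Lean document; each statement's English description precedes it below -/
import Mathlib

section
/- Let a = r/q be a rational number in lowest terms with q >= 2. Then R_+(a) equals Z[1/q], the ring of rational numbers whose denominator divides a power of q. -/
open Finset

/-- `binom(a,n) = a(a-1)⋯(a-n+1)/n!` for a complex number `a`. -/
noncomputable def binomC (a : ℂ) (n : ℕ) : ℂ :=
  (∏ i ∈ Finset.range n, (a - (i : ℂ))) / (n.factorial : ℂ)

/-- `R₊(a)`: the additive submonoid of `ℂ` generated by the binomial coefficients of `a`. -/
noncomputable def RplusSet (a : ℂ) : Set ℂ :=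
  (AddSubmonoid.closure (Set.range (binomC a)) : AddSubmonoid ℂ)

lemma ascFactorial_eq_prod_aux (m : ℕ) : ∀ N : ℕ, m.ascFactorial N = ∏ i ∈ range N, (m + i)
  | 0 => rfl
  | N + 1 => by
      rw [Nat.ascFactorial_succ, prod_range_succ, mul_comm, ascFactorial_eq_prod_aux m N]

lemma fact_dvd_prod_sub (N : ℕ) (s : ℤ) :
    (Nat.factorial N : ℤ) ∣ ∏ i ∈ range N, (s - (i : ℤ)) := by
  rcases le_or_gt 0 s with h | h
  · lift s to ℕ using h
    rcases lt_or_ge s N with hm | hm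
    · rw [Finset.prod_eq_zero (Finset.mem_range.mpr hm) (by simp)]
      exact dvd_zero _
    · have : ∏ i ∈ range N, ((s : ℤ) - (i : ℤ)) = ((s.descFactorial N : ℕ) : ℤ) := by
        rw [Nat.descFactorial_eq_prod_range, Nat.cast_prod]
        refine Finset.prod_congr rfl fun i hi => ?_
        have : i ≤ s := le_trans (Nat.le_of_lt_succ (Nat.lt_succ_of_lt (Finset.mem_range.mp hi))) hm
        push_cast [Nat.cast_sub this]
        ring
      rw [this]
      exact_mod_cast Int.natCast_dvd_natCast.mpr (Nat.factorial_dvd_descFactorial _ _)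
  · set m : ℕ := (-s).toNat with hm
    have hs : s = -(m : ℤ) := by rw [hm]; omega
    have h1 : ∏ i ∈ range N, (s - (i : ℤ)) = ∏ i ∈ range N, ((-1) * ((m : ℤ) + i)) :=
      Finset.prod_congr rfl fun i hi => by rw [hs]; ring
    have : ∏ i ∈ range N, (s - (i : ℤ)) = (-1) ^ N * ((m.ascFactorial N : ℕ) : ℤ) := by
      rw [h1, Finset.prod_mul_distrib, Finset.prod_const, Finset.card_range,
        ascFactorial_eq_prod_aux, Nat.cast_prod]
      push_cast
      ring
    rw [this]
    exact Dvd.dvd.mul_left (Int.natCast_dvd_natCast.mpr (Nat.factorial_dvd_ascFactorial _ _)) _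

lemma coprime_prod_q (r : ℤ) (q : ℕ) (hcop : IsCoprime r (q : ℤ)) (N : ℕ) :
    IsCoprime (∏ i ∈ range N, (r - (i : ℤ) * q)) (q : ℤ) := by
  apply IsCoprime.prod_left
  intro i _
  have h := hcop.add_mul_left_left (-(i : ℤ))
  have : r + (q : ℤ) * -(i : ℤ) = r - (i : ℤ) * q := by ring
  rwa [this] at h

lemma u_dvd_prod (r : ℤ) (q N u : ℕ) (hu : Nat.Coprime u q) (hdvd : u ∣ Nat.factorial N) :
    (u : ℤ) ∣ ∏ i ∈ range N, (r - (i : ℤ) * q) := by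
  obtain ⟨x, y, hxy⟩ : IsCoprime ((q : ℕ) : ℤ) ((u : ℕ) : ℤ) :=
    Nat.isCoprime_iff_coprime.mpr hu.symm
  rw [← ZMod.intCast_zmod_eq_zero_iff_dvd]
  push_cast
  have hq1 : (q : ZMod u) * (x : ZMod u) = 1 := by
    have hd : ((u : ℕ) : ℤ) ∣ (q : ℤ) * x - 1 := ⟨-y, by linear_combination hxy⟩
    have h0 := (ZMod.intCast_zmod_eq_zero_iff_dvd ((q : ℤ) * x - 1) u).mpr hd
    push_cast at h0
    have := sub_eq_zero.mp h0
    exact_mod_cast this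
  have step1 : ∏ i ∈ range N, ((r : ZMod u) - (i : ZMod u) * (q : ZMod u))
      = ∏ i ∈ range N, ((q : ZMod u) * (((x : ZMod u) * r) - i)) := by
    refine Finset.prod_congr rfl fun i _ => ?_
    have : (q : ZMod u) * (((x : ZMod u) * r) - i)
        = ((q : ZMod u) * (x : ZMod u)) * r - (i : ZMod u) * q := by ring
    rw [this, hq1, one_mul]
  have step2 : ((∏ i ∈ range N, ((x * r : ℤ) - (i : ℤ)) : ℤ) : ZMod u) = 0 := by
    rw [ZMod.intCast_zmod_eq_zero_iff_dvd]
    exact dvd_trans (Int.natCast_dvd_natCast.mpr hdvd) (fact_dvd_prod_sub N (x * r))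
  push_cast at step2
  rw [step1, Finset.prod_mul_distrib, Finset.prod_const, Finset.card_range, step2, mul_zero]

lemma exists_split (q : ℕ) (hq : 2 ≤ q) (N : ℕ) :
    ∃ u w : ℕ, u * w = Nat.factorial N ∧ Nat.Coprime u q ∧ w ∣ q ^ (Nat.factorial N) := by
  have hN : Nat.factorial N ≠ 0 := Nat.factorial_ne_zero N
  have hq0 : q ≠ 0 := by omega
  have hqp : q ^ Nat.factorial N ≠ 0 := pow_ne_zero _ hq0
  set w := Nat.gcd (Nat.factorial N) (q ^ Nat.factorial N) with hw
  have hwd : w ∣ Nat.factorial N := Nat.gcd_dvd_left _ _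
  have hwq : w ∣ q ^ Nat.factorial N := Nat.gcd_dvd_right _ _
  refine ⟨Nat.factorial N / w, w, Nat.div_mul_cancel hwd, ?_, hwq⟩
  have hu0 : Nat.factorial N / w ≠ 0 := by
    intro h
    exact hN (by simpa [h] using (Nat.div_mul_cancel hwd).symm)
  by_contra hcop
  obtain ⟨p, hp, hpd⟩ := Nat.exists_prime_and_dvd hcop
  have hpu : p ∣ Nat.factorial N / w := hpd.trans (Nat.gcd_dvd_left _ _)
  have hpq : p ∣ q := hpd.trans (Nat.gcd_dvd_right _ _)
  have hb : 0 < q.factorization p := hp.factorization_pos_of_dvd hq0 hpq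
  have hwfact : w.factorization p = (Nat.factorial N).factorization p := by
    rw [hw, Nat.factorization_gcd hN hqp]
    simp only [Finsupp.inf_apply, Nat.factorization_pow, Finsupp.smul_apply, smul_eq_mul]
    have ha : (Nat.factorial N).factorization p ≤ Nat.factorial N :=
      le_of_lt (Nat.factorization_lt p hN)
    exact min_eq_left (ha.trans (Nat.le_mul_of_pos_right _ hb))
  have hzero : (Nat.factorial N / w).factorization p = 0 := by
    rw [Nat.factorization_div hwd]
    simp [hwfact]
  have := hp.factorization_pos_of_dvd hu0 hpu
  omega

lemma binomC_eq (r : ℤ) (q : ℕ) (hq0 : (q : ℂ) ≠ 0) (N : ℕ) :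
    binomC ((r : ℂ) / q) N
      = ((∏ i ∈ range N, (r - (i : ℤ) * q) : ℤ) : ℂ) / ((q : ℂ) ^ N * (Nat.factorial N : ℂ)) := by
  unfold binomC
  have h1 : ∀ i : ℕ, (r : ℂ) / q - (i : ℂ) = ((r - (i : ℤ) * q : ℤ) : ℂ) / q := by
    intro i; push_cast; field_simp
  rw [Finset.prod_congr rfl fun i _ => h1 i, Finset.prod_div_distrib, Finset.prod_const,
    Finset.card_range, Int.cast_prod, div_div]

/-- For `a = r/q` rational in lowest terms with `q ≥ 2`, `R₊(a) = ℤ[1/q]`. -/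
theorem Rplus_rational (r : ℤ) (q : ℕ) (hq : 2 ≤ q) (hcop : IsCoprime r (q : ℤ)) :
    RplusSet ((r : ℂ) / (q : ℂ)) = {x : ℂ | ∃ (z : ℤ) (n : ℕ), x = (z : ℂ) / (q : ℂ) ^ n} := by
  have hqn0 : q ≠ 0 := by omega
  have hq0 : (q : ℂ) ≠ 0 := Nat.cast_ne_zero.mpr hqn0
  have hq0' : (q : ℚ) ≠ 0 := Nat.cast_ne_zero.mpr hqn0
  set S' : AddSubmonoid ℂ :=
    { carrier := {x : ℂ | ∃ (z : ℤ) (n : ℕ), x = (z : ℂ) / (q : ℂ) ^ n}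
      zero_mem' := ⟨0, 0, by simp⟩
      add_mem' := by
        rintro x y ⟨z1, n1, rfl⟩ ⟨z2, n2, rfl⟩
        refine ⟨z1 * (q : ℤ) ^ n2 + z2 * (q : ℤ) ^ n1, n1 + n2, ?_⟩
        have h1 : ((q : ℂ)) ^ n1 ≠ 0 := pow_ne_zero _ hq0
        have h2 : ((q : ℂ)) ^ n2 ≠ 0 := pow_ne_zero _ hq0
        push_cast
        rw [div_add_div _ _ h1 h2, pow_add]
        ring } with hS'
  apply subset_antisymm
  · -- R₊ ⊆ ℤ[1/q]
    have hle : AddSubmonoid.closure (Set.range (binomC ((r : ℂ) / q))) ≤ S' := by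
      rw [AddSubmonoid.closure_le]
      rintro _ ⟨N, rfl⟩
      obtain ⟨u, w, huw, hcu, hwq⟩ := exists_split q hq N
      obtain ⟨A', hA'⟩ := u_dvd_prod r q N u hcu ⟨w, huw.symm⟩
      obtain ⟨W, hW⟩ := hwq
      refine ⟨A' * (W : ℤ), N + Nat.factorial N, ?_⟩
      rw [binomC_eq r q hq0 N, div_eq_div_iff
        (mul_ne_zero (pow_ne_zero _ hq0) (Nat.cast_ne_zero.mpr (Nat.factorial_ne_zero N)))
        (pow_ne_zero _ hq0)]
      have h1 : ((Nat.factorial N : ℕ) : ℤ) = (u : ℤ) * w := by exact_mod_cast huw.symm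
      have h2 : ((q : ℕ) : ℤ) ^ Nat.factorial N = (w : ℤ) * W := by exact_mod_cast hW
      have key : (∏ i ∈ range N, (r - (i : ℤ) * q)) * (q : ℤ) ^ (N + Nat.factorial N)
          = (A' * (W : ℤ)) * ((q : ℤ) ^ N * (Nat.factorial N : ℤ)) := by
        rw [hA', pow_add, h2, h1]
        ring
      exact_mod_cast key
    intro x hx
    exact hle hx
  · -- ℤ[1/q] ⊆ R₊
    rintro x ⟨z, n, rfl⟩
    set M := AddSubmonoid.closure (Set.range (binomC ((r : ℂ) / q))) with hM
    have h1M : (1 : ℂ) ∈ M := by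
      have hb0 : binomC ((r : ℂ) / q) 0 = 1 := by simp [binomC]
      exact hb0 ▸ AddSubmonoid.subset_closure ⟨0, rfl⟩
    -- find N ≥ n with negative product
    have hfac : ∀ i : ℕ, r - (i : ℤ) * q ≠ 0 := by
      intro i h
      have hdvd : ((q : ℤ)) ∣ r := ⟨i, by linarith⟩
      have hunit := hcop.isUnit_of_dvd' hdvd dvd_rfl
      rw [Int.isUnit_iff] at hunit
      omega
    obtain ⟨N, hNn, hAneg⟩ : ∃ N, n ≤ N ∧ (∏ i ∈ range N, (r - (i : ℤ) * q)) < 0 := by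
      set N1 := max n (r.toNat + 1) with hN1
      have hneg : ∀ i : ℕ, N1 ≤ i → r - (i : ℤ) * q < 0 := by
        intro i hi
        have h2 : r.toNat + 1 ≤ i := le_trans (le_max_right _ _) hi
        have h1 : (i : ℤ) ≤ (i : ℤ) * q :=
          le_mul_of_one_le_right (by positivity) (by exact_mod_cast Nat.one_le_iff_ne_zero.mpr hqn0)
        have h3 : r < (i : ℤ) := by omega
        linarith
      have hprod_ne : (∏ i ∈ range N1, (r - (i : ℤ) * q)) ≠ 0 :=
        Finset.prod_ne_zero_iff.mpr fun i _ => hfac i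
      rcases lt_or_gt_of_ne hprod_ne with h | h
      · exact ⟨N1, le_max_left _ _, h⟩
      · refine ⟨N1 + 1, le_trans (le_max_left _ _) (Nat.le_succ N1), ?_⟩
        rw [prod_range_succ]
        exact mul_neg_of_pos_of_neg h (hneg N1 le_rfl)
    set A : ℤ := ∏ i ∈ range N, (r - (i : ℤ) * q) with hA
    set tQ : ℚ := (A : ℚ) / ((q : ℚ) ^ N * (Nat.factorial N : ℚ)) with htQ
    have hdenpos : (0 : ℚ) < (q : ℚ) ^ N * (Nat.factorial N : ℚ) := by positivity
    have htQneg : tQ < 0 := div_neg_of_neg_of_pos (by exact_mod_cast hAneg) hdenpos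
    set B : ℤ := tQ.num with hB
    set D : ℕ := tQ.den with hD
    have hBneg : B < 0 := Rat.num_neg.mpr htQneg
    have hDpos : (0 : ℤ) < (D : ℤ) := by exact_mod_cast tQ.pos
    have hDneQ : ((D : ℕ) : ℚ) ≠ 0 := Nat.cast_ne_zero.mpr tQ.den_nz
    have cross : (A : ℤ) * D = B * ((q : ℤ) ^ N * (Nat.factorial N : ℤ)) := by
      have h5 : (A : ℚ) / ((q : ℚ) ^ N * (Nat.factorial N : ℚ)) = (B : ℚ) / (D : ℚ) := by
        rw [hB, hD, Rat.num_div_den, htQ]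
      rw [div_eq_div_iff hdenpos.ne' hDneQ] at h5
      exact_mod_cast h5
    have hqNdvd : ((q : ℤ)) ^ N ∣ (D : ℤ) := by
      have hcp : IsCoprime ((q : ℤ) ^ N) A := ((coprime_prod_q r q hcop N).symm.pow_left)
      exact hcp.dvd_of_dvd_mul_left ⟨B * (Nat.factorial N : ℤ), by linear_combination cross⟩
    obtain ⟨D', hD'⟩ : ((q : ℤ)) ^ n ∣ (D : ℤ) :=
      dvd_trans (pow_dvd_pow _ hNn) hqNdvd
    have hcopBD : IsCoprime B (D : ℤ) := by
      rw [Int.isCoprime_iff_gcd_eq_one]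
      simpa [Int.gcd] using tQ.reduced
    obtain ⟨j0, k0, hjk⟩ := hcopBD
    set e1 : ℤ := z * D' * j0 with he1
    set e2 : ℤ := z * D' * k0 with he2
    set s : ℤ := (e1.natAbs : ℤ) + (e2.natAbs : ℤ) with hs
    have hs0 : 0 ≤ s := by positivity
    have hse1 : -e1 ≤ s := by rw [hs]; omega
    have hse2 : -e2 ≤ s := by rw [hs]; omega
    have hD1 : (1 : ℤ) ≤ (D : ℤ) := hDpos
    have hB1 : (1 : ℤ) ≤ -B := by omega
    have hsD : s ≤ s * D := le_mul_of_one_le_right hs0 hD1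
    have hsB : s ≤ s * (-B) := le_mul_of_one_le_right hs0 hB1
    have hj0 : 0 ≤ e1 + s * D := by linarith
    have hk0 : 0 ≤ e2 - s * B := by nlinarith
    set j : ℕ := (e1 + s * D).toNat with hj
    set k : ℕ := (e2 - s * B).toNat with hk
    have hjc : (j : ℤ) = e1 + s * D := Int.toNat_of_nonneg hj0
    have hkc : (k : ℤ) = e2 - s * B := Int.toNat_of_nonneg hk0
    have key : (j : ℤ) * B + (k : ℤ) * D = z * D' := by
      rw [hjc, hkc, he1, he2]
      linear_combination (z * D') * hjk
    -- membership
    have htC : binomC ((r : ℂ) / q) N ∈ M := AddSubmonoid.subset_closure ⟨N, rfl⟩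
    have hDne : (D : ℂ) ≠ 0 := by exact_mod_cast hDpos.ne'
    have htBD : binomC ((r : ℂ) / q) N = (B : ℂ) / (D : ℂ) := by
      rw [binomC_eq r q hq0 N, div_eq_div_iff
        (mul_ne_zero (pow_ne_zero _ hq0) (Nat.cast_ne_zero.mpr (Nat.factorial_ne_zero N))) hDne]
      exact_mod_cast cross
    have hqnne : ((q : ℂ)) ^ n ≠ 0 := pow_ne_zero _ hq0
    have hfinal : (z : ℂ) / (q : ℂ) ^ n
        = j • binomC ((r : ℂ) / q) N + k • (1 : ℂ) := by
      rw [htBD, nsmul_eq_mul, nsmul_eq_mul, mul_one]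
      have keyC : (j : ℂ) * B + (k : ℂ) * D = z * D' := by exact_mod_cast key
      have hD'C : (D : ℂ) = (q : ℂ) ^ n * (D' : ℂ) := by exact_mod_cast hD'
      have hD'ne : (D' : ℂ) ≠ 0 := by
        intro h
        rw [h, mul_zero] at hD'C
        exact hDne hD'C
      field_simp
      linear_combination (-((q : ℂ) ^ n)) * keyC + z * hD'C
    rw [hfinal]
    exact M.add_mem (nsmul_mem htC j) (nsmul_mem h1M k)
end

section
/- For a rational number a = r/q in lowest terms and any prime p not dividing q, and any k >= 0, the p-adic valuation of the product r(r-q)(r-2q)...(r-(k-1)q) is at least v_p(k!); consequently binom(a,k) lies in Z[1/q]. -/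
open Finset

lemma descPoch_eval_eq_prod (s : ℤ) (k : ℕ) :
    (descPochhammer ℤ k).eval s = ∏ i ∈ Finset.range k, (s - (i : ℤ)) := by
  induction k with
  | zero => simp
  | succ n ih =>
    rw [descPochhammer_succ_right, Finset.prod_range_succ, ← ih]
    simp [Polynomial.eval_mul]

lemma factorial_dvd_prod_int (s : ℤ) (k : ℕ) :
    (k.factorial : ℤ) ∣ ∏ i ∈ Finset.range k, (s - (i : ℤ)) := by
  refine ⟨Ring.choose s k, ?_⟩
  have h := Ring.descPochhammer_eq_factorial_smul_choose (R := ℤ) s k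
  rw [← Polynomial.eval_eq_smeval, descPoch_eval_eq_prod] at h
  simpa [nsmul_eq_mul] using h

lemma padicValNat_factorial_le_aux (p k : ℕ) (hp : p.Prime) : padicValNat p k.factorial ≤ k := by
  haveI : Fact p.Prime := ⟨hp⟩
  calc padicValNat p k.factorial ≤ (p - 1) * padicValNat p k.factorial :=
        Nat.le_mul_of_pos_left _ (by have := hp.two_le; omega)
    _ = k - (p.digits k).sum := sub_one_mul_padicValNat_factorial k
    _ ≤ k := Nat.sub_le _ _

/-- Key lemma: part 1. -/
lemma key_dvd (r q : ℤ) (p : ℕ) (hp : p.Prime) (hpq : ¬ (p : ℤ) ∣ q) (k : ℕ) :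
    (p : ℤ) ^ (padicValNat p k.factorial) ∣ ∏ i ∈ Finset.range k, (r - q * (i : ℤ)) := by
  set M := padicValNat p k.factorial with hM
  have hcopqP : IsCoprime q ((p : ℤ) ^ M) :=
    ((((Nat.prime_iff_prime_int.mp hp).coprime_iff_not_dvd.mpr hpq)).symm).pow_right
  obtain ⟨u, v, huv⟩ := hcopqP
  have hcast : ((p : ℤ) ^ M) = ((p ^ M : ℕ) : ℤ) := by push_cast; ring
  rw [hcast, ← ZMod.intCast_zmod_eq_zero_iff_dvd]
  push_cast
  have hp0 : ((p : ZMod (p ^ M)))^M = 0 := by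
    have := ZMod.natCast_self (p ^ M)
    push_cast at this
    exact this
  have hqu : (q : ZMod (p ^ M)) * (u : ZMod (p ^ M)) = 1 := by
    have h1 : ((u * q + v * (p : ℤ) ^ M : ℤ) : ZMod (p ^ M)) = 1 := by rw [huv]; norm_num
    push_cast at h1
    rw [hp0] at h1
    linear_combination h1
  have hfac : ((k.factorial : ℕ) : ZMod (p ^ M)) = 0 := by
    rw [ZMod.natCast_eq_zero_iff]
    exact pow_padicValNat_dvd
  have hprod : (∏ i ∈ Finset.range k, ((r : ZMod (p ^ M)) - q * i))
      = (q : ZMod (p ^ M)) ^ k * ∏ i ∈ Finset.range k, ((u : ZMod (p ^ M)) * r - i) := by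
    calc (∏ i ∈ Finset.range k, ((r : ZMod (p ^ M)) - q * i))
        = ∏ i ∈ Finset.range k, ((q : ZMod (p ^ M)) * ((u : ZMod (p ^ M)) * r - i)) := by
          refine Finset.prod_congr rfl fun i _ => ?_
          have : (q : ZMod (p ^ M)) * ((u : ZMod (p ^ M)) * r - i)
              = ((q : ZMod (p ^ M)) * u) * r - q * i := by ring
          rw [this, hqu, one_mul]
      _ = (q : ZMod (p ^ M)) ^ k * ∏ i ∈ Finset.range k, ((u : ZMod (p ^ M)) * r - i) := by
          rw [Finset.prod_mul_distrib, Finset.prod_const, Finset.card_range]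
  obtain ⟨c, hc⟩ := factorial_dvd_prod_int ((u * r : ℤ)) k
  have hc' : (∏ i ∈ Finset.range k, ((u : ZMod (p ^ M)) * r - i))
      = ((k.factorial : ℕ) : ZMod (p ^ M)) * (c : ZMod (p ^ M)) := by
    have := congrArg (fun x : ℤ => (x : ZMod (p ^ M))) hc
    push_cast at this
    simpa using this
  rw [hprod, hc', hfac, zero_mul, mul_zero]

/-- For `a = r/q` in lowest terms and a prime `p ∤ q`, the `p`-adic valuation of
`r(r-q)⋯(r-(k-1)q)` is at least `v_p(k!)`; consequently `binom(a,k) ∈ ℤ[1/q]`. -/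
theorem valuation_of_numerator (r : ℤ) (q : ℤ) (hq0 : q ≠ 0) (hcop : IsCoprime r q)
    (p : ℕ) (hp : p.Prime) (hpq : ¬ (p : ℤ) ∣ q) (k : ℕ) :
    ((p : ℤ) ^ (padicValNat p k.factorial) ∣ ∏ i ∈ Finset.range k, (r - q * (i : ℤ))) ∧
      ∃ (z : ℤ) (n : ℕ), binomC ((r : ℂ) / (q : ℂ)) k = (z : ℂ) / (q : ℂ) ^ n := by
  refine ⟨key_dvd r q p hp hpq k, ?_⟩
  set A : ℤ := ∏ i ∈ Finset.range k, (r - q * (i : ℤ)) with hA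
  -- divisibility: k! ∣ q^k * A
  have hdvd : (k.factorial : ℤ) ∣ q ^ k * A := by
    rcases eq_or_ne A 0 with h0 | hA0
    · rw [h0, mul_zero]; exact dvd_zero _
    · have hm0 : (q ^ k * A).natAbs ≠ 0 := by
        simp [Int.natAbs_ne_zero, pow_ne_zero, hq0, hA0]
      have hnat : k.factorial ∣ (q ^ k * A).natAbs := by
        rw [← Nat.factorization_le_iff_dvd k.factorial_ne_zero hm0, Finsupp.le_def]
        intro p'
        by_cases hp' : p'.Prime
        · by_cases hp'q : (p' : ℤ) ∣ q
          · have h1 : k.factorial.factorization p' ≤ k := by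
              rw [Nat.factorization_def _ hp']
              exact padicValNat_factorial_le_aux p' k hp'
            have h2 : ((p' ^ k : ℕ) : ℤ) ∣ q ^ k * A := by
              push_cast
              exact Dvd.dvd.mul_right (pow_dvd_pow_of_dvd hp'q k) A
            have h3 : p' ^ k ∣ (q ^ k * A).natAbs := by
              rwa [Int.natCast_dvd] at h2
            exact h1.trans ((Nat.Prime.pow_dvd_iff_le_factorization hp' hm0).mp h3)
          · have h2 : ((p' ^ padicValNat p' k.factorial : ℕ) : ℤ) ∣ q ^ k * A := by
              push_cast
              exact Dvd.dvd.mul_left (key_dvd r q p' hp' hp'q k) (q ^ k)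
            have h3 : p' ^ padicValNat p' k.factorial ∣ (q ^ k * A).natAbs := by
              rwa [Int.natCast_dvd] at h2
            rw [Nat.factorization_def _ hp']
            exact (Nat.Prime.pow_dvd_iff_le_factorization hp' hm0).mp h3
        · simp [Nat.factorization_eq_zero_of_not_prime _ hp']
      exact (Int.natCast_dvd_natCast.mpr hnat).trans (Int.natAbs_dvd.mpr dvd_rfl)
  obtain ⟨z, hz⟩ := hdvd
  refine ⟨z, 2 * k, ?_⟩
  have hqC : (q : ℂ) ≠ 0 := Int.cast_ne_zero.mpr hq0
  have hfC : ((k.factorial : ℕ) : ℂ) ≠ 0 := Nat.cast_ne_zero.mpr k.factorial_ne_zero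
  have hAC : (∏ i ∈ Finset.range k, ((r : ℂ) / q - i)) = (A : ℂ) / (q : ℂ) ^ k := by
    rw [hA]
    push_cast
    have hstep : ∀ i ∈ Finset.range k, ((r : ℂ) / q - i) = ((r : ℂ) - q * i) / q :=
      fun i _ => by field_simp
    rw [Finset.prod_congr rfl hstep, Finset.prod_div_distrib, Finset.prod_const,
      Finset.card_range]
  have hzC : (q : ℂ) ^ k * (A : ℂ) = (k.factorial : ℂ) * z := by
    exact_mod_cast congrArg (fun x : ℤ => (x : ℂ)) hz
  rw [binomC, hAC, div_div,
    div_eq_div_iff (mul_ne_zero (pow_ne_zero _ hqC) hfC) (pow_ne_zero _ hqC)]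
  rw [two_mul, pow_add]
  linear_combination (q : ℂ) ^ k * hzC
end

section
/- For nonnegative integers n, k and any integer-valued polynomial f with nonnegative coefficients in the binomial basis, the alternating sum binom(f(n),k) - C(n,1)*binom(f(n-1),k) + C(n,2)*binom(f(n-2),k) - ... + (-1)^n*binom(f(0),k) is nonnegative. -/
open Finset Function

namespace AltSumAux

/-- All iterated forward differences nonnegative. -/
def Pos (f : ℕ → ℤ) : Prop := ∀ m, ∀ x : ℕ, 0 ≤ (fwdDiff 1)^[m] f x

/-- Iterated forward differences up to order `n` nonnegative. -/
def PosTo (n : ℕ) (f : ℕ → ℤ) : Prop := ∀ m ≤ n, ∀ x : ℕ, 0 ≤ (fwdDiff 1)^[m] f x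

lemma shift_fwdDiff (f : ℕ → ℤ) :
    fwdDiff 1 (fun x => f (x + 1)) = fun x => fwdDiff 1 f (x + 1) := rfl

lemma iter_shift (m : ℕ) (f : ℕ → ℤ) (x : ℕ) :
    (fwdDiff 1)^[m] (fun x => f (x + 1)) x = (fwdDiff 1)^[m] f (x + 1) := by
  induction m generalizing f with
  | zero => simp
  | succ m ih =>
      rw [iterate_succ_apply, iterate_succ_apply, shift_fwdDiff, ih]

lemma fwdDiff_mul (f g : ℕ → ℤ) :
    fwdDiff 1 (f * g) = (fun x => f (x + 1)) * fwdDiff 1 g + fwdDiff 1 f * g := by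
  funext x
  simp only [fwdDiff, Pi.mul_apply, Pi.add_apply]
  ring

lemma posTo_of_le {m n : ℕ} {f : ℕ → ℤ} (h : m ≤ n) (hf : PosTo n f) : PosTo m f :=
  fun m' hm' => hf m' (hm'.trans h)

lemma posTo_shift {n : ℕ} {f : ℕ → ℤ} (hf : PosTo n f) : PosTo n (fun x => f (x + 1)) := by
  intro m hm x
  rw [iter_shift]
  exact hf m hm _

lemma posTo_fwdDiff {n : ℕ} {f : ℕ → ℤ} (hf : PosTo (n + 1) f) : PosTo n (fwdDiff 1 f) := by
  intro m hm x
  rw [← iterate_succ_apply]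
  exact hf (m + 1) (by omega) x

lemma posTo_mul : ∀ (n : ℕ) (f g : ℕ → ℤ), PosTo n f → PosTo n g → PosTo n (f * g) := by
  intro n
  induction n with
  | zero =>
      intro f g hf hg m hm x
      obtain rfl : m = 0 := Nat.le_zero.mp hm
      simpa using mul_nonneg (hf 0 le_rfl x) (hg 0 le_rfl x)
  | succ n ih =>
      intro f g hf hg m hm x
      match m with
      | 0 => simpa using mul_nonneg (hf 0 (by omega) x) (hg 0 (by omega) x)
      | m + 1 =>
          rw [iterate_succ_apply, fwdDiff_mul, fwdDiff_iter_add, Pi.add_apply]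
          have h1 := ih _ _ (posTo_shift (posTo_of_le n.le_succ hf)) (posTo_fwdDiff hg) m
            (by omega) x
          have h2 := ih _ _ (posTo_fwdDiff hf) (posTo_of_le n.le_succ hg) m (by omega) x
          exact add_nonneg h1 h2

lemma iter_zero_fun (m : ℕ) :
    (fwdDiff (1 : ℕ))^[m] (fun _ => (0 : ℤ)) = fun _ => 0 := by
  induction m with
  | zero => simp
  | succ m ih => rw [iterate_succ_apply, fwdDiff_const, ih]

lemma posBinom : ∀ (m j : ℕ) (x : ℕ),
    0 ≤ (fwdDiff 1)^[m] (fun x => (x.choose j : ℤ)) x := by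
  intro m
  induction m with
  | zero => intro j x; simp
  | succ m ih =>
      intro j x
      rw [iterate_succ_apply]
      cases j with
      | zero =>
          have h : fwdDiff (1 : ℕ) (fun x => ((x.choose 0 : ℕ) : ℤ)) = fun _ => 0 := by
            funext y; simp [fwdDiff]
          rw [h, iter_zero_fun]
      | succ j =>
          rw [fwdDiff_choose]
          exact ih j x

lemma posF (t : ℕ) (a : ℕ → ℕ) :
    Pos (fun x => ((∑ j ∈ Finset.range (t + 1), a j * x.choose j : ℕ) : ℤ)) := by
  intro m x
  have hrw : (fun x => ((∑ j ∈ Finset.range (t + 1), a j * x.choose j : ℕ) : ℤ)) =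
      ∑ j ∈ Finset.range (t + 1), (a j : ℤ) • (fun x : ℕ => (x.choose j : ℤ)) := by
    funext y
    push_cast
    simp [Finset.sum_apply, smul_eq_mul]
  rw [hrw, fwdDiff_iter_finset_sum, Finset.sum_apply]
  apply Finset.sum_nonneg
  intro j _
  rw [fwdDiff_iter_const_smul]
  simp only [Pi.smul_apply, smul_eq_mul]
  exact mul_nonneg (by positivity) (posBinom m j x)

lemma compPos : ∀ (n k : ℕ) (f : ℕ → ℕ), Pos (fun x => (f x : ℤ)) →
    PosTo n (fun x => ((f x).choose k : ℤ)) := by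
  intro n
  induction n with
  | zero =>
      intro k f hf m hm x
      obtain rfl : m = 0 := Nat.le_zero.mp hm
      simp
  | succ n ih =>
      intro k f hf m hm x
      match m with
      | 0 => simp
      | m + 1 =>
          have hmono : ∀ y, f y ≤ f (y + 1) := by
            intro y
            have := hf 1 y
            simp only [iterate_one, fwdDiff] at this
            omega
          set d : ℕ → ℕ := fun y => f (y + 1) - f y with hd
          have hdz : (fun y => (d y : ℤ)) = fwdDiff 1 (fun y => (f y : ℤ)) := by
            funext y
            simp only [fwdDiff, hd]
            rw [Nat.cast_sub (hmono y)]
          have hPd : Pos (fun y => (d y : ℤ)) := by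
            rw [hdz]
            intro m' y
            rw [← iterate_succ_apply]
            exact hf (m' + 1) y
          have key : fwdDiff 1 (fun y => ((f y).choose k : ℤ)) =
              ∑ i ∈ Finset.range k,
                ((fun y => ((d y).choose (i + 1) : ℤ)) *
                  (fun y => ((f y).choose (k - (i + 1)) : ℤ))) := by
            funext y
            have h1 : f (y + 1) = d y + f y := by
              have := hmono y
              simp only [hd]
              omega
            have h2 : (f (y + 1)).choose k
                = ∑ i ∈ Finset.range (k + 1), (d y).choose i * (f y).choose (k - i) := by
              rw [h1, Nat.add_choose_eq, Finset.Nat.sum_antidiagonal_eq_sum_range_succ_mk]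
            have h3 : ∑ i ∈ Finset.range (k + 1), (d y).choose i * (f y).choose (k - i)
                = (∑ i ∈ Finset.range k, (d y).choose (i + 1) * (f y).choose (k - (i + 1)))
                  + (f y).choose k := by
              rw [Finset.sum_range_succ']
              simp
            simp only [fwdDiff, Finset.sum_apply, Pi.mul_apply]
            rw [h2, h3]
            push_cast
            ring
          rw [iterate_succ_apply, key, fwdDiff_iter_finset_sum, Finset.sum_apply]
          apply Finset.sum_nonneg
          intro i _
          exact posTo_mul n _ _ (ih (i + 1) d hPd) (ih (k - (i + 1)) f hf) m (by omega) x

end AltSumAux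

open Finset

/-- For `f(x) = ∑_j a_j · binom(x,j)` with nonnegative integer coefficients, the alternating sum
`∑_{i=0}^n (-1)^i C(n,i) binom(f(n-i), k)` is nonnegative. -/
theorem alternating_sum_nonneg (t : ℕ) (a : ℕ → ℕ) (n k : ℕ) :
    0 ≤ ∑ i ∈ Finset.range (n + 1),
        (-1 : ℤ) ^ i * (n.choose i : ℤ) *
          (((∑ j ∈ Finset.range (t + 1), a j * (n - i).choose j).choose k : ℤ)) := by
  set F : ℕ → ℤ :=
    fun x => (((∑ j ∈ Finset.range (t + 1), a j * x.choose j).choose k : ℕ) : ℤ) with hF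
  have hPos : 0 ≤ (fwdDiff 1)^[n] F 0 :=
    AltSumAux.compPos n k _ (AltSumAux.posF t a) n le_rfl 0
  have hformula := fwdDiff_iter_eq_sum_shift (1 : ℕ) F n 0
  have hstep : ∑ i ∈ Finset.range (n + 1),
      (-1 : ℤ) ^ i * (n.choose i : ℤ) * F (n - i)
      = ∑ i ∈ Finset.range (n + 1), (-1 : ℤ) ^ (n - i) * (n.choose i : ℤ) * F i := by
    rw [← Finset.sum_range_reflect]
    apply Finset.sum_congr rfl
    intro j hj
    have hj' : j ≤ n := by
      simp only [Finset.mem_range] at hj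
      omega
    have : n + 1 - 1 - j = n - j := by omega
    rw [this, Nat.choose_symm hj', Nat.sub_sub_self hj']
  calc (0 : ℤ) ≤ (fwdDiff 1)^[n] F 0 := hPos
    _ = ∑ i ∈ Finset.range (n + 1), (-1 : ℤ) ^ (n - i) * (n.choose i : ℤ) * F i := by
        rw [hformula]
        apply Finset.sum_congr rfl
        intro i _
        simp [smul_eq_mul, mul_assoc]
    _ = _ := hstep.symm
end

section
/- If f(x) is a nonnegative integer linear combination of binomial coefficient polynomials binom(x,j), then for every k >= 0 the polynomial binom(f(x),k) is also a nonnegative integer linear combination of binomial coefficient polynomials; consequently, for any complex number a, if b is in R_+(a) then R_+(b) is contained in R_+(a). -/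
open Polynomial Finset

/-- The binomial coefficient polynomial `binom(x,n) = x(x-1)⋯(x-n+1)/n!` in `ℚ[x]`. -/
noncomputable def binomPoly (n : ℕ) : Polynomial ℚ :=
  Polynomial.C ((n.factorial : ℚ)⁻¹) * ∏ i ∈ Finset.range n, (Polynomial.X - Polynomial.C (i : ℚ))

/-- `R₊(x)`: the additive submonoid of `ℚ[x]` generated by the binomial polynomials. -/
noncomputable def RplusPoly : Set (Polynomial ℚ) :=
  (AddSubmonoid.closure (Set.range binomPoly) : AddSubmonoid (Polynomial ℚ))

/-- `binom(f(x),k) = f(x)(f(x)-1)⋯(f(x)-k+1)/k!`. -/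
noncomputable def binomOf (f : Polynomial ℚ) (k : ℕ) : Polynomial ℚ :=
  Polynomial.C ((k.factorial : ℚ)⁻¹) * ∏ i ∈ Finset.range k, (f - Polynomial.C (i : ℚ))

namespace BRaux

/-- binomial coefficient function on ℚ -/
noncomputable def br (a : ℚ) (k : ℕ) : ℚ :=
  (k.factorial : ℚ)⁻¹ * ∏ i ∈ Finset.range k, (a - i)

lemma eval_binomOf (f : Polynomial ℚ) (k : ℕ) (x : ℚ) :
    (binomOf f k).eval x = br (f.eval x) k := by
  simp [binomOf, br, eval_prod]

lemma binomPoly_eq (n : ℕ) : binomPoly n = binomOf X n := rfl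

lemma prod_cast_sub (m k : ℕ) :
    (∏ i ∈ Finset.range k, ((m : ℚ) - i)) = (m.descFactorial k : ℚ) := by
  induction k with
  | zero => simp
  | succ k ih =>
      rw [Finset.prod_range_succ, ih, Nat.descFactorial_succ]
      rcases le_or_gt (k+1) m with h | h
      · have hk : k ≤ m := by omega
        push_cast [Nat.cast_sub hk]
        ring
      · have hd : m.descFactorial (k+1) = 0 := Nat.descFactorial_eq_zero_iff_lt.2 (by omega)
        rcases Nat.lt_or_ge m k with h' | h'
        · have : m.descFactorial k = 0 := Nat.descFactorial_eq_zero_iff_lt.2 h'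
          simp [this, hd]
        · have : m = k := by omega
          subst this
          simp [hd]

lemma br_nat (m k : ℕ) : br (m : ℚ) k = (m.choose k : ℚ) := by
  rw [br, prod_cast_sub, Nat.descFactorial_eq_factorial_mul_choose]
  have : (k.factorial : ℚ) ≠ 0 := by positivity
  push_cast
  field_simp

/-- Polynomials agreeing on all naturals are equal. -/
lemma eq_of_eval_nat {p q : Polynomial ℚ} (h : ∀ n : ℕ, p.eval (n : ℚ) = q.eval (n : ℚ)) :
    p = q := by
  have : p - q = 0 := by
    apply Polynomial.eq_zero_of_infinite_isRoot
    apply Set.Infinite.mono (s := Set.range (fun n : ℕ => (n : ℚ)))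
    · rintro x ⟨n, rfl⟩
      simp [Polynomial.IsRoot, h n]
    · exact Set.infinite_range_of_injective Nat.cast_injective
  exact sub_eq_zero.mp this

/-- Vandermonde over ℚ, step 1: second argument natural. -/
lemma vm_q_nat (a : ℚ) (n k : ℕ) :
    br (a + n) k = ∑ i ∈ Finset.range (k+1), br a i * br (n:ℚ) (k - i) := by
  have hpoly : binomOf (X + Polynomial.C (n:ℚ)) k
      = ∑ i ∈ Finset.range (k+1), binomOf X i * Polynomial.C (br (n:ℚ) (k - i)) := by
    apply eq_of_eval_nat
    intro m
    have hv := Nat.add_choose_eq m n k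
    rw [Nat.sum_antidiagonal_eq_sum_range_succ_mk] at hv
    simp only [eval_finset_sum, eval_mul, eval_C, eval_binomOf, eval_add, eval_X]
    rw [show ((m:ℚ) + (n:ℚ)) = ((m + n : ℕ) : ℚ) by push_cast; ring]
    simp only [br_nat]
    exact_mod_cast congrArg (fun x : ℕ => (x : ℚ)) hv
  have := congrArg (Polynomial.eval a) hpoly
  simpa only [eval_finset_sum, eval_mul, eval_C, eval_binomOf, eval_add, eval_X] using this

/-- Vandermonde over ℚ. -/
lemma vm_q (a b : ℚ) (k : ℕ) :
    br (a + b) k = ∑ i ∈ Finset.range (k+1), br a i * br b (k - i) := by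
  have hpoly : binomOf (Polynomial.C a + X) k
      = ∑ i ∈ Finset.range (k+1), Polynomial.C (br a i) * binomOf X (k - i) := by
    apply eq_of_eval_nat
    intro n
    simp only [eval_finset_sum, eval_mul, eval_C, eval_binomOf, eval_add, eval_X]
    exact vm_q_nat a n k
  have := congrArg (Polynomial.eval b) hpoly
  simpa only [eval_finset_sum, eval_mul, eval_C, eval_binomOf, eval_add, eval_X] using this

/-- Vandermonde for polynomials. -/
lemma vm_poly (f g : Polynomial ℚ) (k : ℕ) :
    binomOf (f + g) k = ∑ i ∈ Finset.range (k+1), binomOf f i * binomOf g (k - i) := by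
  apply eq_of_eval_nat
  intro n
  simp only [eval_finset_sum, eval_mul, eval_binomOf, eval_add]
  exact vm_q _ _ k

end BRaux

namespace BRaux

/-- The finite difference operator. -/
noncomputable def del (p : Polynomial ℚ) : Polynomial ℚ := p.comp (X + 1) - p

lemma del_add (p q : Polynomial ℚ) : del (p + q) = del p + del q := by
  simp only [del, add_comp]; ring

lemma del_zero : del 0 = 0 := by simp [del]

lemma del_natCast (m : ℕ) : del (m : Polynomial ℚ) = 0 := by simp [del]

lemma del_mul (p q : Polynomial ℚ) :
    del (p * q) = del p * q + p * del q + del p * del q := by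
  simp only [del, mul_comp]; ring

lemma eval_comp_X_add_one (p : Polynomial ℚ) (n : ℕ) :
    (p.comp (X + 1)).eval (n : ℚ) = p.eval ((n + 1 : ℕ) : ℚ) := by
  simp [eval_comp]

lemma binomOf_comp (f g : Polynomial ℚ) (k : ℕ) :
    (binomOf f k).comp g = binomOf (f.comp g) k := by
  apply eq_of_eval_nat
  intro n
  simp [eval_comp, eval_binomOf]

lemma binomOf_zero (f : Polynomial ℚ) : binomOf f 0 = 1 := by
  simp [binomOf]

lemma del_binomOf (f : Polynomial ℚ) (k : ℕ) :
    del (binomOf f k) = ∑ i ∈ Finset.range k, binomOf f i * binomOf (del f) (k - i) := by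
  have h1 : (binomOf f k).comp (X + 1) = binomOf (f + del f) k := by
    rw [binomOf_comp]
    congr 1
    simp [del]
  rw [del, h1, vm_poly, Finset.sum_range_succ, Nat.sub_self, binomOf_zero]
  ring

lemma del_binomPoly_succ (j : ℕ) : del (binomPoly (j + 1)) = binomPoly j := by
  apply eq_of_eval_nat
  intro n
  rw [del, eval_sub, eval_comp_X_add_one]
  rw [binomPoly_eq, binomPoly_eq, eval_binomOf, eval_binomOf, eval_binomOf]
  simp only [eval_X]
  rw [br_nat, br_nat, br_nat, Nat.choose_succ_succ]
  push_cast
  ring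

noncomputable def M : AddSubmonoid (Polynomial ℚ) :=
  AddSubmonoid.closure (Set.range binomPoly)

lemma binomPoly_mem (j : ℕ) : binomPoly j ∈ M :=
  AddSubmonoid.subset_closure ⟨j, rfl⟩

lemma binomPoly_zero : binomPoly 0 = 1 := by simp [binomPoly]

lemma one_mem_M : (1 : Polynomial ℚ) ∈ M := binomPoly_zero ▸ binomPoly_mem 0

lemma natCast_mem (m : ℕ) : ((m : Polynomial ℚ)) ∈ M := by
  have : ((m : Polynomial ℚ)) = m • (1 : Polynomial ℚ) := by simp
  rw [this]
  exact AddSubmonoid.nsmul_mem _ one_mem_M m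

lemma eval_binomPoly_nat (j n : ℕ) :
    (binomPoly j).eval (n : ℚ) = (n.choose j : ℚ) := by
  rw [binomPoly_eq, eval_binomOf, eval_X, br_nat]

lemma eval_zero_mem {f : Polynomial ℚ} (hf : f ∈ M) : ∃ m : ℕ, f.eval 0 = (m : ℚ) := by
  induction hf using AddSubmonoid.closure_induction with
  | mem x hx =>
      obtain ⟨j, rfl⟩ := hx
      refine ⟨Nat.choose 0 j, ?_⟩
      have := eval_binomPoly_nat j 0
      simpa using this
  | zero => exact ⟨0, by simp⟩
  | add p q _ _ hp hq =>
      obtain ⟨a, ha⟩ := hp; obtain ⟨b, hb⟩ := hq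
      exact ⟨a + b, by simp [ha, hb]⟩

lemma del_mem {f : Polynomial ℚ} (hf : f ∈ M) : del f ∈ M := by
  induction hf using AddSubmonoid.closure_induction with
  | mem x hx =>
      obtain ⟨j, rfl⟩ := hx
      cases j with
      | zero =>
          rw [binomPoly_zero]
          have : del (1 : Polynomial ℚ) = 0 := by simp [del]
          rw [this]; exact M.zero_mem
      | succ j => rw [del_binomPoly_succ]; exact binomPoly_mem j
  | zero => rw [del_zero]; exact M.zero_mem
  | add p q _ _ hp hq => rw [del_add]; exact M.add_mem hp hq

lemma eq_zero_of_del {p : Polynomial ℚ} (h : del p = 0) (h0 : p.eval 0 = 0) : p = 0 := by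
  have hcomp : p.comp (X + 1) = p := by
    have := sub_eq_zero.mp h
    exact this
  have key : ∀ n : ℕ, p.eval (n : ℚ) = 0 := by
    intro n
    induction n with
    | zero => simpa using h0
    | succ n ih =>
        have := congrArg (Polynomial.eval (n : ℚ)) hcomp
        rw [eval_comp_X_add_one] at this
        rw [this, ih]
  have : p = (0 : Polynomial ℚ) := eq_of_eval_nat (by simpa using key)
  exact this

lemma exists_primitive {f : Polynomial ℚ} (hf : f ∈ M) :
    ∃ g ∈ M, del g = f ∧ g.eval 0 = 0 := by
  induction hf using AddSubmonoid.closure_induction with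
  | mem x hx =>
      obtain ⟨j, rfl⟩ := hx
      refine ⟨binomPoly (j+1), binomPoly_mem _, del_binomPoly_succ j, ?_⟩
      have := eval_binomPoly_nat (j+1) 0
      simpa using this
  | zero => exact ⟨0, M.zero_mem, del_zero, by simp⟩
  | add p q _ _ hp hq =>
      obtain ⟨g1, hg1, hd1, he1⟩ := hp
      obtain ⟨g2, hg2, hd2, he2⟩ := hq
      exact ⟨g1 + g2, M.add_mem hg1 hg2, by rw [del_add, hd1, hd2], by simp [he1, he2]⟩

lemma mem_of_del {f : Polynomial ℚ} (hd : del f ∈ M) (m : ℕ) (h0 : f.eval 0 = (m : ℚ)) :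
    f ∈ M := by
  obtain ⟨g, hg, hdel, he⟩ := exists_primitive hd
  have hf : f = g + (m : Polynomial ℚ) := by
    have hz : f - g - (m : Polynomial ℚ) = 0 := by
      apply eq_zero_of_del
      · rw [show f - g - (m : Polynomial ℚ) = f - g - (m : Polynomial ℚ) from rfl]
        have : del (f - g - (m : Polynomial ℚ)) = del f - del g - del (m : Polynomial ℚ) := by
          simp only [del, sub_comp, natCast_comp]
          ring
        rw [this, hdel, del_natCast]
        ring
      · simp [h0, he]
    linear_combination hz
  rw [hf]
  exact M.add_mem hg (natCast_mem m)

end BRaux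

namespace BRaux

lemma eval_zero_binomPoly_succ (j : ℕ) : (binomPoly (j+1)).eval 0 = 0 := by
  have := eval_binomPoly_nat (j+1) 0
  simpa using this

lemma binom_mul_mem : ∀ n i j : ℕ, i + j ≤ n → binomPoly i * binomPoly j ∈ M := by
  intro n
  induction n with
  | zero =>
      intro i j hij
      have hi : i = 0 := by omega
      have hj : j = 0 := by omega
      subst hi; subst hj
      rw [binomPoly_zero, one_mul]
      exact one_mem_M
  | succ n ih =>
      intro i j hij
      match i, j with
      | 0, j => rw [binomPoly_zero, one_mul]; exact binomPoly_mem j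
      | i, 0 => rw [binomPoly_zero, mul_one]; exact binomPoly_mem i
      | i+1, j+1 =>
          apply mem_of_del (m := 0)
          · rw [del_mul, del_binomPoly_succ, del_binomPoly_succ]
            refine M.add_mem (M.add_mem ?_ ?_) ?_
            · exact ih i (j+1) (by omega)
            · exact ih (i+1) j (by omega)
            · exact ih i j (by omega)
          · simp [eval_zero_binomPoly_succ]

lemma mul_mem_M {f g : Polynomial ℚ} (hf : f ∈ M) (hg : g ∈ M) : f * g ∈ M := by
  have key : ∀ i : ℕ, ∀ g : Polynomial ℚ, g ∈ M → binomPoly i * g ∈ M := by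
    intro i g hg
    induction hg using AddSubmonoid.closure_induction with
    | mem x hx =>
        obtain ⟨j, rfl⟩ := hx
        exact binom_mul_mem (i + j) i j le_rfl
    | zero => rw [mul_zero]; exact M.zero_mem
    | add p q _ _ hp hq => rw [mul_add]; exact M.add_mem hp hq
  induction hf using AddSubmonoid.closure_induction with
  | mem x hx =>
      obtain ⟨j, rfl⟩ := hx
      exact key j g hg
  | zero => rw [zero_mul]; exact M.zero_mem
  | add p q _ _ hp hq => rw [add_mul]; exact M.add_mem hp hq

lemma hasseDeriv_natDegree (f : Polynomial ℚ) :
    Polynomial.hasseDeriv f.natDegree f = Polynomial.C (f.coeff f.natDegree) := by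
  ext m
  rw [Polynomial.hasseDeriv_coeff]
  cases m with
  | zero => simp
  | succ m =>
      rw [Polynomial.coeff_C]
      have h1 : f.coeff (m + 1 + f.natDegree) = 0 :=
        Polynomial.coeff_eq_zero_of_natDegree_lt (by omega)
      simp [h1]

lemma natDegree_del_lt {f : Polynomial ℚ} (h : 0 < f.natDegree) :
    (del f).natDegree < f.natDegree := by
  set n := f.natDegree with hn
  have htaylor : (Polynomial.taylor 1 f : Polynomial ℚ) = f.comp (X + 1) := by
    rw [Polynomial.taylor_apply, Polynomial.C_1]
  have hdeg : (del f).natDegree ≤ n := by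
    rw [del, ← htaylor]
    refine (Polynomial.natDegree_sub_le _ _).trans ?_
    rw [Polynomial.natDegree_taylor]
    simp
    omega
  have hcoeff : (del f).coeff n = 0 := by
    rw [del, ← htaylor, Polynomial.coeff_sub, Polynomial.taylor_coeff,
      hasseDeriv_natDegree, Polynomial.eval_C]
    ring
  rcases lt_or_eq_of_le hdeg with h' | h'
  · exact h'
  · by_cases hz : del f = 0
    · rw [hz]; simpa using h
    · exfalso
      apply hz
      apply Polynomial.leadingCoeff_eq_zero.mp
      rw [Polynomial.leadingCoeff, h', hcoeff]

lemma binomOf_C (a : ℚ) (k : ℕ) :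
    binomOf (Polynomial.C a) k = Polynomial.C (br a k) := by
  apply eq_of_eval_nat
  intro n
  simp [eval_binomOf]

lemma binomOf_const_mem {f : Polynomial ℚ} (hf : f ∈ M) (h : f.natDegree = 0) (k : ℕ) :
    binomOf f k ∈ M := by
  obtain ⟨m, hm⟩ := eval_zero_mem hf
  have hfc : f = Polynomial.C ((m : ℚ)) := by
    have h1 := Polynomial.eq_C_of_natDegree_eq_zero h
    rw [h1]
    congr 1
    rw [← hm, Polynomial.coeff_zero_eq_eval_zero]
  rw [hfc, binomOf_C, br_nat, Polynomial.C_eq_natCast]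
  exact natCast_mem _

lemma binomOf_mem_aux : ∀ d : ℕ, ∀ f : Polynomial ℚ, f ∈ M → f.natDegree ≤ d →
    ∀ k : ℕ, binomOf f k ∈ M := by
  intro d
  induction d with
  | zero => intro f hf hd k; exact binomOf_const_mem hf (Nat.le_zero.mp hd) k
  | succ d ih =>
      intro f hf hd k
      by_cases h0 : f.natDegree = 0
      · exact binomOf_const_mem hf h0 k
      · have hdel : del f ∈ M := del_mem hf
        have hdd : (del f).natDegree ≤ d := by
          have := natDegree_del_lt (f := f) (by omega)
          omega
        obtain ⟨m, hm⟩ := eval_zero_mem hf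
        induction k using Nat.strong_induction_on with
        | _ k ihk =>
            cases k with
            | zero => rw [binomOf_zero]; exact one_mem_M
            | succ k =>
                apply mem_of_del (m := m.choose (k+1))
                · rw [del_binomOf]
                  apply AddSubmonoid.sum_mem
                  intro i hi
                  have hik : i < k + 1 := Finset.mem_range.mp hi
                  exact mul_mem_M (ihk i hik) (ih (del f) hdel hdd (k + 1 - i))
                · rw [eval_binomOf, hm, br_nat]

lemma binomOf_mem {f : Polynomial ℚ} (hf : f ∈ M) (k : ℕ) : binomOf f k ∈ M :=
  binomOf_mem_aux f.natDegree f hf le_rfl k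

lemma comp_mem {g f : Polynomial ℚ} (hg : g ∈ M) (hf : f ∈ M) : g.comp f ∈ M := by
  induction hg using AddSubmonoid.closure_induction with
  | mem x hx =>
      obtain ⟨j, rfl⟩ := hx
      rw [binomPoly_eq, binomOf_comp, Polynomial.X_comp]
      exact binomOf_mem hf j
  | zero => rw [Polynomial.zero_comp]; exact M.zero_mem
  | add p q _ _ hp hq => rw [Polynomial.add_comp]; exact M.add_mem hp hq

end BRaux

namespace BRaux

lemma aeval_binomPoly (a : ℂ) (n : ℕ) :
    Polynomial.aeval a (binomPoly n) = binomC a n := by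
  rw [binomPoly, binomC, map_mul, map_prod, Polynomial.aeval_C]
  have h1 : (algebraMap ℚ ℂ) ((n.factorial : ℚ)⁻¹) = ((n.factorial : ℂ))⁻¹ := by
    rw [map_inv₀, map_natCast]
  rw [h1, div_eq_inv_mul]
  congr 1
  apply Finset.prod_congr rfl
  intro i _
  rw [map_sub, Polynomial.aeval_X, Polynomial.aeval_C, map_natCast]

lemma range_binomC (a : ℂ) :
    Set.range (binomC a) = (Polynomial.aeval a (R := ℚ)) '' Set.range binomPoly := by
  have h : binomC a = (Polynomial.aeval a (R := ℚ)) ∘ binomPoly :=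
    funext fun n => (aeval_binomPoly a n).symm
  rw [h, Set.range_comp]

lemma RplusSet_eq_map (a : ℂ) :
    AddSubmonoid.closure (Set.range (binomC a)) =
      AddSubmonoid.map (Polynomial.aeval a : Polynomial ℚ →ₐ[ℚ] ℂ) M := by
  rw [range_binomC, M]
  exact (AddMonoidHom.map_mclosure _ _).symm

lemma mem_RplusSet_iff (a : ℂ) (x : ℂ) :
    x ∈ RplusSet a ↔ ∃ f ∈ M, Polynomial.aeval a f = x := by
  rw [RplusSet]
  change x ∈ AddSubmonoid.closure (Set.range (binomC a)) ↔ _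
  rw [RplusSet_eq_map]
  exact AddSubmonoid.mem_map

end BRaux


theorem binom_of_Rplus_mem_and_Rplus_mono :
    (∀ f ∈ RplusPoly, ∀ k : ℕ, binomOf f k ∈ RplusPoly) ∧
      ∀ a b : ℂ, b ∈ RplusSet a → RplusSet b ⊆ RplusSet a := by
  constructor
  · intro f hf k
    have hf' : f ∈ BRaux.M := hf
    exact BRaux.binomOf_mem hf' k
  · intro a b hb c hc
    obtain ⟨f, hfM, hfb⟩ := (BRaux.mem_RplusSet_iff a b).mp hb
    obtain ⟨g, hgM, hgc⟩ := (BRaux.mem_RplusSet_iff b c).mp hc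
    refine (BRaux.mem_RplusSet_iff a c).mpr ⟨g.comp f, BRaux.comp_mem hgM hfM, ?_⟩
    rw [Polynomial.aeval_comp, hfb, hgc]
end

section
/- For any polynomial p in Q[x] with p(n) nonzero for every nonnegative integer n, there exists a polynomial s in Q[x] such that all coefficients of p(x)s(x) in the binomial coefficient basis are nonnegative and the constant term p(0)s(0) is strictly positive. -/
open Polynomial Finset

/-- The finite difference operator `Δp(x) = p(x+1) - p(x)` on `ℚ[x]`. -/
noncomputable def deltaP (f : Polynomial ℚ) : Polynomial ℚ :=
  f.comp (Polynomial.X + 1) - f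

namespace DeltaAux


lemma deltaP_def (f : Polynomial ℚ) : deltaP f = f.comp (X + 1) - f := rfl

lemma eval_deltaP (f : Polynomial ℚ) (x : ℚ) :
    (deltaP f).eval x = f.eval (x + 1) - f.eval x := by
  simp [deltaP_def, eval_comp]

lemma deltaP_add (f g : Polynomial ℚ) : deltaP (f + g) = deltaP f + deltaP g := by
  simp only [deltaP_def, add_comp]; ring

lemma deltaP_sub (f g : Polynomial ℚ) : deltaP (f - g) = deltaP f - deltaP g := by
  simp only [deltaP_def, sub_comp]; ring

lemma deltaP_C_mul (a : ℚ) (f : Polynomial ℚ) : deltaP (C a * f) = C a * deltaP f := by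
  simp only [deltaP_def, mul_comp, C_comp]; ring

lemma deltaP_zero : deltaP 0 = 0 := by simp [deltaP_def]

lemma deltaP_C (a : ℚ) : deltaP (C a) = 0 := by simp [deltaP_def]

lemma deltaP_comp (f : Polynomial ℚ) : deltaP (f.comp (X + 1)) = (deltaP f).comp (X + 1) := by
  simp only [deltaP_def, sub_comp]

lemma iter_add (n : ℕ) (f g : Polynomial ℚ) :
    deltaP^[n] (f + g) = deltaP^[n] f + deltaP^[n] g := by
  induction n generalizing f g with
  | zero => rfl
  | succ n ih => simp only [Function.iterate_succ_apply, deltaP_add, ih]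

lemma iter_sub (n : ℕ) (f g : Polynomial ℚ) :
    deltaP^[n] (f - g) = deltaP^[n] f - deltaP^[n] g := by
  induction n generalizing f g with
  | zero => rfl
  | succ n ih => simp only [Function.iterate_succ_apply, deltaP_sub, ih]

lemma iter_C_mul (n : ℕ) (a : ℚ) (f : Polynomial ℚ) :
    deltaP^[n] (C a * f) = C a * deltaP^[n] f := by
  induction n generalizing f with
  | zero => rfl
  | succ n ih => simp only [Function.iterate_succ_apply, deltaP_C_mul, ih]

lemma iter_comp (n : ℕ) (f : Polynomial ℚ) :
    deltaP^[n] (f.comp (X + 1)) = (deltaP^[n] f).comp (X + 1) := by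
  induction n generalizing f with
  | zero => rfl
  | succ n ih => simp only [Function.iterate_succ_apply, deltaP_comp, ih]

lemma iter_C_one (n : ℕ) : deltaP^[n + 1] (C (1:ℚ)) = 0 := by
  rw [Function.iterate_succ_apply, deltaP_C]
  exact Function.iterate_fixed deltaP_zero n


lemma coeff_comp_X_add_one (v : Polynomial ℚ) (n : ℕ) :
    (v.comp (X + 1)).coeff n = ∑ k ∈ v.support, v.coeff k * (k.choose n : ℚ) := by
  rw [comp_eq_sum_left, Polynomial.sum_def, finset_sum_coeff]
  refine Finset.sum_congr rfl fun k _ => ?_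
  rw [coeff_C_mul, coeff_X_add_one_pow]

lemma coeff_deltaP (v : Polynomial ℚ) (n : ℕ) :
    (deltaP v).coeff n = (∑ k ∈ v.support, v.coeff k * (k.choose n : ℚ)) - v.coeff n := by
  rw [deltaP_def, coeff_sub, coeff_comp_X_add_one]

lemma natDegree_deltaP_le (v : Polynomial ℚ) (e : ℕ) (hv : v.natDegree ≤ e + 1) :
    (deltaP v).natDegree ≤ e := by
  rw [natDegree_le_iff_coeff_eq_zero]
  intro N hN
  rw [coeff_deltaP]
  have hsum : ∑ k ∈ v.support, v.coeff k * (k.choose N : ℚ)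
      = ∑ k ∈ v.support, if k = N then v.coeff k else 0 := by
    refine Finset.sum_congr rfl fun k hk => ?_
    rcases eq_or_ne k N with rfl | hkN
    · simp
    · have hk' : k ≤ e + 1 := le_trans (le_natDegree_of_mem_supp k hk) hv
      rw [Nat.choose_eq_zero_of_lt (by omega)]
      simp [hkN]
  rw [hsum, Finset.sum_ite_eq' v.support N]
  by_cases hN' : N ∈ v.support
  · simp [hN']
  · simp [hN', notMem_support_iff.mp hN']

lemma coeff_deltaP_top (v : Polynomial ℚ) (e : ℕ) (hv : v.natDegree ≤ e + 1) :
    (deltaP v).coeff e = ((e : ℚ) + 1) * v.coeff (e + 1) := by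
  rw [coeff_deltaP]
  have hsub : v.support ⊆ Finset.range (e + 2) :=
    supp_subset_range (lt_of_le_of_lt hv (Nat.lt_succ_self _))
  rw [Finset.sum_subset hsub (fun k _ hk => by rw [notMem_support_iff.mp hk, zero_mul])]
  rw [Finset.sum_range_succ, Finset.sum_range_succ]
  have h0 : ∑ k ∈ Finset.range e, v.coeff k * (k.choose e : ℚ) = 0 := by
    refine Finset.sum_eq_zero fun k hk => ?_
    rw [Nat.choose_eq_zero_of_lt (Finset.mem_range.mp hk)]
    simp
  rw [h0, Nat.choose_self, Nat.choose_succ_self_right]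
  push_cast
  ring

lemma deltaP_zero' : deltaP 0 = 0 := by simp [deltaP_def]
lemma deltaP_C' (a : ℚ) : deltaP (C a) = 0 := by simp [deltaP_def]

lemma iter_deltaP_zero : ∀ (n : ℕ) (v : Polynomial ℚ), v.natDegree ≤ n → deltaP^[n + 1] v = 0
  | 0, v, hv => by
    rw [Function.iterate_one, eq_C_of_natDegree_le_zero hv, deltaP_C']
  | (n + 1), v, hv => by
    rw [Function.iterate_succ_apply]
    exact iter_deltaP_zero n (deltaP v) (natDegree_deltaP_le v n hv)


-- agreement lemma
lemma iter_eval_congr : ∀ (n : ℕ) (f g : Polynomial ℚ) (j : ℕ),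
    (∀ k : ℕ, k ≤ n → f.eval ((j + k : ℕ) : ℚ) = g.eval ((j + k : ℕ) : ℚ)) →
    (deltaP^[n] f).eval (j : ℚ) = (deltaP^[n] g).eval (j : ℚ)
  | 0, f, g, j, hfg => by simpa using hfg 0 le_rfl
  | (n + 1), f, g, j, hfg => by
    rw [Function.iterate_succ_apply, Function.iterate_succ_apply]
    refine iter_eval_congr n _ _ j fun k hk => ?_
    have e1 : ((j + k : ℕ) : ℚ) + 1 = ((j + (k + 1) : ℕ) : ℚ) := by push_cast; ring
    rw [eval_deltaP, eval_deltaP, hfg k (by omega), e1, hfg (k + 1) (by omega)]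

lemma D1 (a : ℚ) (v : Polynomial ℚ) :
    deltaP ((X + C a) * v) = (X + C a) * deltaP v + v.comp (X + 1) := by
  simp only [deltaP_def, mul_comp, add_comp, X_comp, C_comp]
  ring

lemma D2 : ∀ (i : ℕ) (a : ℚ) (v : Polynomial ℚ),
    deltaP^[i + 1] ((X + C a) * v)
      = (X + C a) * deltaP^[i + 1] v + C ((i : ℚ) + 1) * ((deltaP^[i] v).comp (X + 1))
  | 0, a, v => by
    simpa using D1 a v
  | (i + 1), a, v => by
    rw [Function.iterate_succ_apply, D1, iter_add, D2 i a (deltaP v), iter_comp,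
      ← Function.iterate_succ_apply deltaP (i + 1) v,
      ← Function.iterate_succ_apply deltaP i v]
    push_cast
    simp only [map_add, map_one]
    ring


noncomputable def FF (m : ℕ) : Polynomial ℚ := ∏ k ∈ Finset.range m, (X - C (k : ℚ))

noncomputable def TT (v : Polynomial ℚ) (M : ℕ) : Polynomial ℚ :=
  (X + C 1) * (v.comp (X + 1)) - (X - C (M : ℚ)) * v

lemma FF_succ_comp (M : ℕ) : (FF (M + 1)).comp (X + 1) = (X + 1) * FF M := by
  unfold FF
  rw [Polynomial.prod_comp, Finset.prod_range_succ']
  have h0 : ((X - C ((0 : ℕ) : ℚ)).comp (X + 1)) = X + 1 := by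
    simp [sub_comp]
  have hs : ∀ k ∈ Finset.range M, (X - C ((k + 1 : ℕ) : ℚ)).comp (X + 1) = X - C (k : ℚ) := by
    intro k _
    have hc : ((k + 1 : ℕ) : ℚ) = (k : ℚ) + 1 := by push_cast; ring
    rw [sub_comp, X_comp, C_comp, hc, map_add, map_one]
    ring
  rw [Finset.prod_congr rfl hs, h0, mul_comm]

lemma FF_succ (M : ℕ) : FF (M + 1) = FF M * (X - C (M : ℚ)) := Finset.prod_range_succ _ _

lemma FF_eval_zero (M : ℕ) : (FF (M + 1)).eval 0 = 0 := by
  unfold FF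
  rw [eval_prod]
  refine Finset.prod_eq_zero (Finset.mem_range.mpr (Nat.succ_pos M)) ?_
  simp

lemma L2 (v : Polynomial ℚ) (M : ℕ) : deltaP (v * FF (M + 1)) = TT v M * FF M := by
  rw [deltaP_def, mul_comp, FF_succ_comp, TT]
  rw [FF_succ]
  simp only [C_1]
  ring

lemma lemC : ∀ (i : ℕ) (v : Polynomial ℚ) (M : ℕ),
    (deltaP^[i] (TT v M)).eval (M : ℚ) = ((M : ℚ) + 1 + i) * (deltaP^[i] v).eval ((M : ℚ) + 1)
  | 0, v, M => by
    simp only [Function.iterate_zero, id_eq, TT, eval_sub, eval_mul, eval_add, eval_X, eval_C,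
      eval_comp, eval_one, Nat.cast_zero]
    ring
  | (i + 1), v, M => by
    have hX : (X : Polynomial ℚ) - C (M : ℚ) = X + C (-(M : ℚ)) := by
      rw [map_neg]; ring
    rw [TT, hX, iter_sub, D2, D2, iter_comp, iter_comp]
    have key : (deltaP^[i] v).eval ((M : ℚ) + 1 + 1) - (deltaP^[i] v).eval ((M : ℚ) + 1)
        = (deltaP^[i + 1] v).eval ((M : ℚ) + 1) := by
      rw [Function.iterate_succ_apply', eval_deltaP]
    simp only [eval_add, eval_sub, eval_mul, eval_C, eval_X, eval_comp, eval_one]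
    push_cast
    linear_combination ((i : ℚ) + 1) * key

lemma L3 : ∀ (M : ℕ) (v : Polynomial ℚ) (i : ℕ),
    (deltaP^[M + i] (v * FF M)).eval 0
      = ((M + i).descFactorial M : ℚ) * (deltaP^[i] v).eval (M : ℚ)
  | 0, v, i => by
    simp [FF]
  | (M + 1), v, i => by
    have hn : (M + 1) + i = (M + i) + 1 := by omega
    rw [hn, Function.iterate_succ_apply, L2, L3 M (TT v M) i, lemC,
      Nat.succ_descFactorial_succ]
    push_cast
    ring

lemma L4 : ∀ (M : ℕ) (v : Polynomial ℚ) (n : ℕ), n < M → (deltaP^[n] (v * FF M)).eval 0 = 0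
  | 0, _, n, hn => absurd hn (by omega)
  | (M + 1), v, 0, _ => by
    simp [FF_eval_zero M]
  | (M + 1), v, (n + 1), hn => by
    rw [Function.iterate_succ_apply, L2]
    exact L4 M (TT v M) n (by omega)


lemma eventual_pos : ∀ (e : ℕ) (v : Polynomial ℚ), v.natDegree ≤ e → 0 < v.coeff e →
    ∃ M : ℕ, (∀ i : ℕ, i ≤ e → ∀ m : ℕ, M ≤ m → 0 < (deltaP^[i] v).eval (m : ℚ)) ∧
      (∀ m₁ m₂ : ℕ, M ≤ m₁ → m₁ ≤ m₂ → v.eval (m₁ : ℚ) ≤ v.eval (m₂ : ℚ))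
  | 0, v, hd, hc => by
    have hv : v = C (v.coeff 0) := eq_C_of_natDegree_le_zero hd
    refine ⟨0, fun i hi m _ => ?_, fun m₁ m₂ _ _ => by rw [hv]; simp⟩
    interval_cases i
    simp only [Function.iterate_zero, id_eq]
    rw [hv, eval_C]
    exact hc
  | (e + 1), v, hd, hc => by
    have hdw : (deltaP v).natDegree ≤ e := natDegree_deltaP_le v e hd
    have hcw : 0 < (deltaP v).coeff e := by
      rw [coeff_deltaP_top v e hd]
      have : (0:ℚ) < (e : ℚ) + 1 := by positivity
      exact mul_pos this hc
    obtain ⟨M₁, hpos, hmono⟩ := eventual_pos e (deltaP v) hdw hcw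
    have hδpos : 0 < (deltaP v).eval ((M₁ : ℕ) : ℚ) := by
      simpa using hpos 0 (Nat.zero_le _) M₁ le_rfl
    set δ := (deltaP v).eval ((M₁ : ℕ) : ℚ) with hδ
    have grow : ∀ k : ℕ, v.eval ((M₁ : ℕ) : ℚ) + k * δ ≤ v.eval ((M₁ + k : ℕ) : ℚ) := by
      intro k
      induction k with
      | zero => simp
      | succ k ih =>
        have hstep : δ ≤ (deltaP v).eval ((M₁ + k : ℕ) : ℚ) :=
          hmono M₁ (M₁ + k) le_rfl (by omega)
        have hev := eval_deltaP v ((M₁ + k : ℕ) : ℚ)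
        have hc1 : ((M₁ + (k + 1) : ℕ) : ℚ) = ((M₁ + k : ℕ) : ℚ) + 1 := by push_cast; ring
        rw [hc1]
        have hr : ((k:ℚ) + 1) * δ = (k:ℚ) * δ + δ := by ring
        push_cast at hev hstep ih ⊢
        linarith
    -- v is monotone from M₁ on
    have mono' : ∀ (m k : ℕ), M₁ ≤ m → v.eval ((m : ℕ) : ℚ) ≤ v.eval ((m + k : ℕ) : ℚ) := by
      intro m k hm
      induction k with
      | zero => simp
      | succ k ih =>
        have hstep : 0 < (deltaP v).eval ((m + k : ℕ) : ℚ) := by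
          simpa using hpos 0 (Nat.zero_le _) (m + k) (by omega)
        have hev := eval_deltaP v ((m + k : ℕ) : ℚ)
        have hc1 : ((m + (k + 1) : ℕ) : ℚ) = ((m + k : ℕ) : ℚ) + 1 := by push_cast; ring
        rw [hc1]
        linarith
    obtain ⟨K, hK⟩ := exists_nat_gt ((-(v.eval ((M₁ : ℕ) : ℚ))) / δ)
    have hKδ : -(v.eval ((M₁ : ℕ) : ℚ)) < K * δ := by
      rw [div_lt_iff₀ hδpos] at hK
      linarith
    refine ⟨M₁ + K, ?_, ?_⟩
    · intro i hi m hm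
      match i with
      | 0 =>
        have h1 := grow (m - M₁)
        have hKm : (K : ℚ) ≤ ((m - M₁ : ℕ) : ℚ) := by
          exact_mod_cast (by omega : K ≤ m - M₁)
        have h2 : (K : ℚ) * δ ≤ ((m - M₁ : ℕ) : ℚ) * δ :=
          mul_le_mul_of_nonneg_right hKm hδpos.le
        have hmm : M₁ + (m - M₁) = m := by omega
        rw [hmm] at h1
        simp only [Function.iterate_zero, id_eq]
        linarith
      | (i + 1) =>
        have := hpos i (by omega) m (by omega)
        rwa [Function.iterate_succ_apply]
    · intro m₁ m₂ hm₁ hle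
      have := mono' m₁ (m₂ - m₁) (by omega)
      rwa [show m₁ + (m₂ - m₁) = m₂ by omega] at this


end DeltaAux

open DeltaAux in
/-- For a polynomial `p` nonvanishing at all nonnegative integers, there is a multiplier `s`
making all binomial-basis coefficients of `p·s` nonnegative, with positive constant term.
(The binomial-basis coefficients of `f` are `(Δⁿf)(0)`.) -/
theorem multiply_to_get_pos_coeffs (p : Polynomial ℚ) (h : ∀ n : ℕ, p.eval (n : ℚ) ≠ 0) :
    ∃ s : Polynomial ℚ,
      (∀ n : ℕ, 0 ≤ (deltaP^[n] (p * s)).eval 0) ∧ 0 < p.eval 0 * s.eval 0 := by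
  classical
  have hp : p ≠ 0 := by
    intro hp0
    exact h 0 (by simp [hp0])
  set d := p.natDegree with hd
  set D := d + d with hD
  set v : Polynomial ℚ := p * p with hv
  have hvdeg : v.natDegree = D := by
    rw [hv, natDegree_mul hp hp]
  have hvcoeff : 0 < v.coeff D := by
    rw [hv, hD, hd, coeff_mul_degree_add_degree]
    exact mul_self_pos.mpr (leadingCoeff_ne_zero.mpr hp)
  obtain ⟨M₁, hpos, _⟩ := eventual_pos D v (le_of_eq hvdeg) hvcoeff
  set M₀ := M₁ + 1 with hM₀
  -- interpolation nodes
  set sN : Finset ℚ := (Finset.range M₀).image (fun k : ℕ => (k : ℚ)) with hsN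
  have hinj : Set.InjOn id (sN : Set ℚ) := Set.injOn_id _
  set t : Polynomial ℚ := Lagrange.interpolate sN id (fun x => (p.eval x)⁻¹) with ht
  have htval : ∀ k : ℕ, k < M₀ → t.eval ((k : ℕ) : ℚ) = (p.eval ((k : ℕ) : ℚ))⁻¹ := by
    intro k hk
    have hmem : ((k : ℕ) : ℚ) ∈ sN := by
      rw [hsN]
      exact Finset.mem_image.mpr ⟨k, Finset.mem_range.mpr hk, rfl⟩
    exact Lagrange.eval_interpolate_at_node (fun x => (p.eval x)⁻¹) hinj hmem
  have hg2val : ∀ k : ℕ, k < M₀ → (p * t).eval ((k : ℕ) : ℚ) = 1 := by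
    intro k hk
    rw [eval_mul, htval k hk, mul_inv_cancel₀ (h k)]
  have htdeg : t.natDegree ≤ M₀ := by
    rw [natDegree_le_iff_degree_le]
    refine le_of_lt ?_
    have := Lagrange.degree_interpolate_lt (r := fun x => (p.eval x)⁻¹) hinj
    rwa [hsN, Finset.card_image_of_injective _ Nat.cast_injective, Finset.card_range] at this
  -- binomial coefficients of the two parts
  set c1 : ℕ → ℚ := fun n => (deltaP^[n] (v * FF M₀)).eval 0 with hc1
  set c2 : ℕ → ℚ := fun n => (deltaP^[n] (p * t)).eval 0 with hc2
  set lam : ℚ := ∑ i ∈ Finset.range (D + 1), max 0 (-(c2 (M₀ + i)) / c1 (M₀ + i)) with hlam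
  have hlam_nonneg : 0 ≤ lam :=
    Finset.sum_nonneg fun i _ => le_max_left _ _
  -- the multiplier
  refine ⟨C lam * (p * FF M₀) + t, ?_, ?_⟩
  all_goals {
    have hps : p * (C lam * (p * FF M₀) + t) = C lam * (v * FF M₀) + p * t := by
      rw [hv]; ring
    have hcn : ∀ n : ℕ, (deltaP^[n] (p * (C lam * (p * FF M₀) + t))).eval 0
        = lam * c1 n + c2 n := by
      intro n
      rw [hps, iter_add, iter_C_mul, eval_add, eval_mul, eval_C, hc1, hc2]
    have hc1pos : ∀ i : ℕ, i ≤ D → 0 < c1 (M₀ + i) := by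
      intro i hi
      rw [hc1]
      simp only
      rw [L3]
      have hdesc : (0 : ℚ) < ((M₀ + i).descFactorial M₀ : ℚ) := by
        have : (M₀ + i).descFactorial M₀ ≠ 0 := by
          intro h0
          have := Nat.descFactorial_eq_zero_iff_lt.mp h0
          omega
        exact_mod_cast Nat.pos_of_ne_zero this
      exact mul_pos hdesc (hpos i hi M₀ (by omega))
    have hc1zero : ∀ n : ℕ, n < M₀ → c1 n = 0 := fun n hn => L4 M₀ v n hn
    have hc1zero' : ∀ i : ℕ, D < i → c1 (M₀ + i) = 0 := by
      intro i hi
      rw [hc1]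
      simp only
      rw [L3]
      rcases i with _ | i'
      · omega
      · rw [iter_deltaP_zero i' v (by omega)]
        simp
    have hc2zero' : ∀ n : ℕ, M₀ + D < n → c2 n = 0 := by
      intro n hn
      rcases n with _ | n'
      · omega
      · rw [hc2]
        simp only
        rw [iter_deltaP_zero n' (p * t) ?_]
        · simp
        · calc (p * t).natDegree ≤ p.natDegree + t.natDegree := natDegree_mul_le
            _ ≤ d + M₀ := by rw [← hd]; exact Nat.add_le_add_left htdeg _
            _ ≤ n' := by omega
    have hc2zero : ∀ n : ℕ, 1 ≤ n → n < M₀ → c2 n = 0 := by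
      intro n hn1 hn2
      rw [hc2]
      simp only
      have hcongr := iter_eval_congr n (p * t) (C 1) 0 ?_
      · rcases n with _ | n'
        · omega
        · rw [Nat.cast_zero] at hcongr
          rw [hcongr, iter_C_one]
          simp
      · intro k hk
        rw [hg2val (0 + k) (by omega)]
        simp
    have hc2zeroone : c2 0 = 1 := by
      rw [hc2]
      simp only [Function.iterate_zero, id_eq]
      have := hg2val 0 (by omega)
      rwa [Nat.cast_zero] at this
    have hlam_bound : ∀ i : ℕ, i ≤ D → 0 ≤ lam * c1 (M₀ + i) + c2 (M₀ + i) := by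
      intro i hi
      have hterm : max 0 (-(c2 (M₀ + i)) / c1 (M₀ + i)) ≤ lam := by
        rw [hlam]
        exact Finset.single_le_sum (f := fun j => max 0 (-(c2 (M₀ + j)) / c1 (M₀ + j)))
          (fun j _ => le_max_left _ _) (Finset.mem_range.mpr (by omega))
      have hle : -(c2 (M₀ + i)) / c1 (M₀ + i) ≤ lam :=
        le_trans (le_max_right _ _) hterm
      have hpos1 := hc1pos i hi
      rw [div_le_iff₀ hpos1] at hle
      nlinarith [hle, hpos1]
    first
    | · -- goal 1 : all coefficients nonneg
        intro n
        rw [hcn n]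
        rcases lt_or_ge n M₀ with hn | hn
        · rw [hc1zero n hn]
          rcases Nat.eq_zero_or_pos n with rfl | hn1
          · rw [hc2zeroone]; norm_num
          · rw [hc2zero n hn1 hn]; simp
        · rcases le_or_gt n (M₀ + D) with hn2 | hn2
          · have hi : n = M₀ + (n - M₀) := by omega
            rw [hi]
            exact hlam_bound (n - M₀) (by omega)
          · rw [hc2zero' n hn2, show n = M₀ + (n - M₀) by omega,
              hc1zero' (n - M₀) (by omega)]
            simp
    | · -- goal 2 : positive constant term
        have h0 : p.eval 0 * ((C lam * (p * FF M₀) + t).eval 0)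
            = (deltaP^[0] (p * (C lam * (p * FF M₀) + t))).eval 0 := by
          simp [eval_mul]
        rw [h0, hcn 0, hc1zero 0 (by omega), hc2zeroone]
        norm_num
  }
end

section
/- For any algebraic number a that is not a nonnegative integer, -1 belongs to R_+(a), and hence R_+(a) is a subring of the complex numbers. -/
open Finset

open Polynomial

noncomputable def dfq (p : Polynomial ℚ) : Polynomial ℚ := p.comp (X + 1) - p

lemma binomC_zero (a : ℂ) : binomC a 0 = 1 := by simp [binomC]

lemma binomC_succ (a : ℂ) (k : ℕ) :
    ((k : ℂ) + 1) * binomC a (k + 1) = (a - k) * binomC a k := by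
  unfold binomC
  rw [Finset.prod_range_succ, Nat.factorial_succ]
  have hk : ((k+1).factorial : ℂ) ≠ 0 := by exact_mod_cast (Nat.factorial_pos _).ne'
  have hk2 : (k.factorial : ℂ) ≠ 0 := by exact_mod_cast (Nat.factorial_pos _).ne'
  have hne : ((k:ℂ)+1) ≠ 0 := by exact_mod_cast (Nat.succ_ne_zero k)
  push_cast
  rw [mul_div_assoc', mul_div_mul_left _ _ hne, mul_comm (a - (k:ℂ)), mul_div_assoc]
  ring

lemma binomC_natCast (N k : ℕ) : binomC (N : ℂ) k = (N.choose k : ℂ) := by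
  induction k with
  | zero => simp [binomC_zero]
  | succ k ih =>
    have h := binomC_succ (N : ℂ) k
    rw [ih] at h
    have hk : ((k : ℂ) + 1) ≠ 0 := by exact_mod_cast (Nat.succ_ne_zero k)
    refine mul_left_cancel₀ hk ?_
    rw [h]
    rcases lt_or_ge k N with hlt | hle
    · have hchoose : (N.choose (k+1) * (k+1) : ℕ) = (N.choose k * (N - k) : ℕ) :=
        Nat.choose_succ_right_eq N k
      have hcast : ((N : ℂ) - k) = ((N - k : ℕ) : ℂ) := by rw [Nat.cast_sub hlt.le]
      rw [hcast, ← Nat.cast_mul, mul_comm ((N-k)) (N.choose k)]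
      rw [mul_comm ((k:ℂ)+1), ← Nat.cast_add_one, ← Nat.cast_mul, hchoose]
    · have h1 : N.choose (k+1) = 0 := Nat.choose_eq_zero_of_lt (by omega)
      rw [h1, Nat.cast_zero, mul_zero]
      rcases eq_or_lt_of_le hle with he | hlt2
      · subst he; ring
      · rw [Nat.choose_eq_zero_of_lt hlt2, Nat.cast_zero, mul_zero]

/-- the binomial polynomial over ℂ -/
noncomputable def Bpoly (k : ℕ) : Polynomial ℂ :=
  Polynomial.C ((k.factorial : ℂ)⁻¹) * ∏ i ∈ Finset.range k, (Polynomial.X - Polynomial.C (i : ℂ))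

lemma Bpoly_eval (z : ℂ) (k : ℕ) : (Bpoly k).eval z = binomC z k := by
  simp [Bpoly, binomC, eval_prod, div_eq_inv_mul]

lemma poly_eval_eq_of_nat {P Q : Polynomial ℂ} (h : ∀ N : ℕ, P.eval (N : ℂ) = Q.eval (N : ℂ)) :
    ∀ z : ℂ, P.eval z = Q.eval z := by
  have : P = Q := by
    apply Polynomial.eq_of_infinite_eval_eq
    apply Set.Infinite.mono (s := Set.range ((↑) : ℕ → ℂ))
    · rintro x ⟨N, rfl⟩; exact h N
    · exact Set.infinite_range_of_injective Nat.cast_injective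
  intro z; rw [this]

-- subset-of-subset identity
lemma choose_mul_choose_aux (m r j : ℕ) :
    (m + r).choose m * r.choose j = (m + j).choose j * (m + r).choose (m + j) := by
  rcases le_or_gt j r with hjr | hrj
  · have key : (m + r).choose m * r.choose j * (m.factorial * j.factorial * (r - j).factorial)
        = (m + j).choose j * (m + r).choose (m + j) * (m.factorial * j.factorial * (r - j).factorial) := by
      have e1 : (m + r).choose m * m.factorial * r.factorial = (m + r).factorial := by
        have := Nat.choose_mul_factorial_mul_factorial (Nat.le_add_right m r)
        simpa [Nat.add_sub_cancel_left] using this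
      have e2 : r.choose j * j.factorial * (r - j).factorial = r.factorial :=
        Nat.choose_mul_factorial_mul_factorial hjr
      have e3 : (m + j).choose j * j.factorial * m.factorial = (m + j).factorial := by
        have := Nat.choose_mul_factorial_mul_factorial (Nat.le_add_left j m)
        simpa [Nat.add_sub_cancel] using this
      have e4 : (m + r).choose (m + j) * (m + j).factorial * (r - j).factorial
          = (m + r).factorial := by
        have h1 : m + j ≤ m + r := Nat.add_le_add_left hjr m
        have := Nat.choose_mul_factorial_mul_factorial h1
        have h2 : m + r - (m + j) = r - j := by omega
        rw [h2] at this
        exact this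
      calc (m + r).choose m * r.choose j * (m.factorial * j.factorial * (r - j).factorial)
          = ((m + r).choose m * m.factorial * (r.choose j * j.factorial * (r - j).factorial)) := by ring
        _ = (m + r).choose m * m.factorial * r.factorial := by rw [e2]
        _ = (m + r).factorial := e1
        _ = (m + r).choose (m + j) * (m + j).factorial * (r - j).factorial := e4.symm
        _ = (m + r).choose (m + j) * ((m + j).choose j * j.factorial * m.factorial) * (r - j).factorial := by rw [e3]
        _ = (m + j).choose j * (m + r).choose (m + j) * (m.factorial * j.factorial * (r - j).factorial) := by ring
    exact Nat.eq_of_mul_eq_mul_right (by positivity) key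
  · have h0 : (m + r).choose (m + j) = 0 := Nat.choose_eq_zero_of_lt (by omega)
    rw [Nat.choose_eq_zero_of_lt hrj, h0, mul_zero, mul_zero]

-- the product identity for natural binomial coefficients
lemma choose_mul_choose_eq (N m n : ℕ) :
    N.choose m * N.choose n
      = ∑ ij ∈ antidiagonal n, (m.choose ij.1 * (m + ij.2).choose ij.2) * N.choose (m + ij.2) := by
  rcases le_or_gt m N with hmN | hNm
  · obtain ⟨r, rfl⟩ := Nat.exists_eq_add_of_le hmN
    rw [show (m + r).choose n = ∑ ij ∈ antidiagonal n, m.choose ij.1 * r.choose ij.2 from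
      Nat.add_choose_eq m r n, Finset.mul_sum, Finset.sum_congr rfl]
    intro ij _
    rw [mul_comm ((m+r).choose m), mul_assoc, mul_comm (r.choose ij.2),
      choose_mul_choose_aux m r ij.2]
    ring
  · rw [Nat.choose_eq_zero_of_lt hNm, zero_mul]
    symm
    apply Finset.sum_eq_zero
    intro ij _
    have h0 : N.choose (m + ij.2) = 0 := Nat.choose_eq_zero_of_lt (by omega)
    rw [h0, mul_zero]

lemma binomC_mul (a : ℂ) (m n : ℕ) :
    binomC a m * binomC a n
      = ∑ ij ∈ antidiagonal n,
          ((m.choose ij.1 * (m + ij.2).choose ij.2 : ℕ) : ℂ) * binomC a (m + ij.2) := by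
  have key := poly_eval_eq_of_nat (P := Bpoly m * Bpoly n)
    (Q := ∑ ij ∈ antidiagonal n,
      Polynomial.C ((m.choose ij.1 * (m + ij.2).choose ij.2 : ℕ) : ℂ) * Bpoly (m + ij.2)) ?_ a
  · simpa [eval_finset_sum, Bpoly_eval] using key
  · intro N
    simp only [eval_mul, eval_finset_sum, eval_C, Bpoly_eval, binomC_natCast]
    exact_mod_cast choose_mul_choose_eq N m n

lemma mem_Rplus_of_gen (a : ℂ) (k : ℕ) : binomC a k ∈ RplusSet a :=
  AddSubmonoid.subset_closure (Set.mem_range_self k)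

lemma Rplus_mul_mem (a : ℂ) {x y : ℂ} (hx : x ∈ RplusSet a) (hy : y ∈ RplusSet a) :
    x * y ∈ RplusSet a := by
  change x * y ∈ AddSubmonoid.closure (Set.range (binomC a))
  induction hx using AddSubmonoid.closure_induction generalizing y with
  | mem x hxg =>
    induction hy using AddSubmonoid.closure_induction with
    | mem y hyg =>
      obtain ⟨m, rfl⟩ := hxg
      obtain ⟨n, rfl⟩ := hyg
      rw [binomC_mul a m n]
      apply AddSubmonoid.sum_mem
      intro ij _
      have hsm : ((m.choose ij.1 * (m + ij.2).choose ij.2 : ℕ) : ℂ) * binomC a (m + ij.2)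
          = (m.choose ij.1 * (m + ij.2).choose ij.2 : ℕ) • binomC a (m + ij.2) := by
        rw [nsmul_eq_mul]
      rw [hsm]
      exact AddSubmonoid.nsmul_mem (S := AddSubmonoid.closure (Set.range (binomC a)))
        (mem_Rplus_of_gen a (m + ij.2)) _
    | zero => rw [mul_zero]; exact AddSubmonoid.zero_mem _
    | add y z hy hz ihy ihz => rw [mul_add]; exact AddSubmonoid.add_mem _ ihy ihz
  | zero => rw [zero_mul]; exact AddSubmonoid.zero_mem _
  | add x₁ x₂ h1 h2 ih1 ih2 =>
    rw [add_mul]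
    exact AddSubmonoid.add_mem _ (ih1 hy) (ih2 hy)

lemma dfq_eval (p : Polynomial ℚ) (x : ℚ) : (dfq p).eval x = p.eval (x + 1) - p.eval x := by
  simp [dfq, eval_comp]

lemma comp_X_add_one_coeff (p : Polynomial ℚ) (j : ℕ) :
    (p.comp (X + 1)).coeff j = ∑ i ∈ p.support, p.coeff i * (i.choose j : ℚ) := by
  rw [comp_eq_sum_left, Polynomial.coeff_sum]
  unfold Polynomial.sum
  apply Finset.sum_congr rfl
  intro i _
  simp [coeff_C_mul, coeff_X_add_one_pow]

lemma dfq_coeff_ge (p : Polynomial ℚ) (j : ℕ) (hj : p.natDegree ≤ j) : (dfq p).coeff j = 0 := by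
  rw [dfq, coeff_sub, comp_X_add_one_coeff]
  have : ∑ i ∈ p.support, p.coeff i * (i.choose j : ℚ) = p.coeff j := by
    rw [Finset.sum_eq_single j]
    · simp
    · intro b hb hbj
      have hb' : b < j := lt_of_le_of_ne (le_trans (le_natDegree_of_mem_supp b hb) hj) hbj
      rw [Nat.choose_eq_zero_of_lt hb', Nat.cast_zero, mul_zero]
    · intro hj'
      rw [notMem_support_iff.mp hj', zero_mul]
  rw [this, sub_self]

lemma dfq_coeff_pred (p : Polynomial ℚ) (hd : 1 ≤ p.natDegree) :
    (dfq p).coeff (p.natDegree - 1) = (p.natDegree : ℚ) * p.leadingCoeff := by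
  set d := p.natDegree with hdef
  rw [dfq, coeff_sub, comp_X_add_one_coeff]
  have hsub : p.support ⊆ Finset.range (d + 1) := by
    intro i hi
    rw [Finset.mem_range]
    exact Nat.lt_succ_of_le (le_natDegree_of_mem_supp i hi)
  have hext : ∑ i ∈ p.support, p.coeff i * (i.choose (d-1) : ℚ)
      = ∑ i ∈ Finset.range (d + 1), p.coeff i * (i.choose (d-1) : ℚ) := by
    apply Finset.sum_subset hsub
    intro i _ hi
    rw [notMem_support_iff.mp hi, zero_mul]
  rw [hext]
  obtain ⟨e, he⟩ : ∃ e, d = e + 1 := ⟨d - 1, by omega⟩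
  have hrange : d + 1 = e + 1 + 1 := by omega
  rw [hrange, Finset.sum_range_succ, Finset.sum_range_succ]
  have h1 : ∑ i ∈ Finset.range e, p.coeff i * (i.choose (d-1) : ℚ) = 0 := by
    apply Finset.sum_eq_zero
    intro i hi
    rw [Finset.mem_range] at hi
    rw [Nat.choose_eq_zero_of_lt (by omega), Nat.cast_zero, mul_zero]
  have h2 : (e.choose (d-1) : ℚ) = 1 := by
    have : d - 1 = e := by omega
    rw [this, Nat.choose_self, Nat.cast_one]
  have h3 : ((e+1).choose (d-1) : ℚ) = (d : ℚ) := by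
    have : d - 1 = e := by omega
    rw [this, Nat.choose_succ_self_right]
    exact_mod_cast congrArg Nat.cast he.symm
  rw [h1, h2, h3, zero_add, mul_one]
  have hlc : p.coeff (e+1) = p.leadingCoeff := by rw [← he, hdef]; rfl
  rw [hlc]
  have he2 : d - 1 = e := by omega
  rw [he2]
  ring

lemma dfq_of_natDegree_zero (p : Polynomial ℚ) (h : p.natDegree = 0) : dfq p = 0 := by
  ext j
  rw [dfq_coeff_ge p j (by omega), coeff_zero]

lemma dfq_natDegree_le (p : Polynomial ℚ) (hd : 1 ≤ p.natDegree) :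
    (dfq p).natDegree ≤ p.natDegree - 1 := by
  rw [Polynomial.natDegree_le_iff_coeff_eq_zero]
  intro m hm
  exact dfq_coeff_ge p m (by omega)

lemma dfq_natDegree_eq (p : Polynomial ℚ) (hp : p ≠ 0) (hd : 1 ≤ p.natDegree) :
    (dfq p).natDegree = p.natDegree - 1 ∧
      (dfq p).leadingCoeff = (p.natDegree : ℚ) * p.leadingCoeff := by
  have hcoeff := dfq_coeff_pred p hd
  have hne : (dfq p).coeff (p.natDegree - 1) ≠ 0 := by
    rw [hcoeff]
    exact mul_ne_zero (by exact_mod_cast (by omega : p.natDegree ≠ 0))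
      (leadingCoeff_ne_zero.mpr hp)
  have hge := le_natDegree_of_ne_zero hne
  have hle := dfq_natDegree_le p hd
  have heq : (dfq p).natDegree = p.natDegree - 1 := le_antisymm hle hge
  exact ⟨heq, by rw [Polynomial.leadingCoeff, heq, hcoeff]⟩

lemma dfq_iterate_zero_of_lt (p : Polynomial ℚ) (k : ℕ) (h : p.natDegree < k) :
    dfq^[k] p = 0 := by
  induction k generalizing p with
  | zero => omega
  | succ k ih =>
    rw [Function.iterate_succ_apply]
    rcases Nat.eq_zero_or_pos p.natDegree with h0 | h1
    · rw [dfq_of_natDegree_zero p h0]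
      rcases Nat.eq_zero_or_pos k with rfl | hk
      · rfl
      · exact ih 0 (by simp; omega)
    · apply ih
      have := dfq_natDegree_le p h1
      omega

-- sequence differences
def dseq (u : ℕ → ℚ) : ℕ → ℚ := fun n => u (n + 1) - u n

lemma newton_nat (u : ℕ → ℚ) (m n : ℕ) :
    u (n + m) = ∑ k ∈ Finset.range (m + 1), (m.choose k : ℚ) * (dseq^[k] u) n := by
  induction m generalizing n with
  | zero => simp
  | succ m ih =>
    have step : ∀ k, (dseq^[k] u) (n + 1) = (dseq^[k] u) n + (dseq^[k+1] u) n := by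
      intro k
      rw [Function.iterate_succ_apply']
      show _ = _ + ((dseq^[k] u) (n + 1) - (dseq^[k] u) n)
      ring
    have h1 : u (n + (m + 1)) = u ((n + 1) + m) := by ring_nf
    rw [h1, ih (n + 1)]
    have h2 : ∑ k ∈ Finset.range (m + 1), (m.choose k : ℚ) * (dseq^[k] u) (n+1)
        = (∑ k ∈ Finset.range (m + 1), (m.choose k : ℚ) * (dseq^[k] u) n)
          + ∑ k ∈ Finset.range (m + 1), (m.choose k : ℚ) * (dseq^[k+1] u) n := by
      rw [← Finset.sum_add_distrib]
      apply Finset.sum_congr rfl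
      intro k _
      rw [step k]
      ring
    rw [h2]
    have h3 : ∑ k ∈ Finset.range (m + 2), ((m+1).choose k : ℚ) * (dseq^[k] u) n
        = (∑ k ∈ Finset.range (m + 1), ((m.choose (k+1) : ℚ) + (m.choose k : ℚ)) * (dseq^[k+1] u) n)
          + (dseq^[0] u) n := by
      rw [Finset.sum_range_succ']
      simp only [Nat.choose_succ_succ, Nat.cast_add, Nat.choose_zero_right, Nat.cast_one, one_mul]
      congr 1
      apply Finset.sum_congr rfl
      intro k _
      ring
    rw [h3]
    have h4 : ∑ k ∈ Finset.range (m + 1), (m.choose k : ℚ) * (dseq^[k] u) n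
        = (∑ k ∈ Finset.range m, (m.choose (k+1) : ℚ) * (dseq^[k+1] u) n) + (dseq^[0] u) n := by
      rw [Finset.sum_range_succ']
      simp
    have h5 : ∑ k ∈ Finset.range (m + 1), (m.choose (k+1) : ℚ) * (dseq^[k+1] u) n
        = ∑ k ∈ Finset.range m, (m.choose (k+1) : ℚ) * (dseq^[k+1] u) n := by
      rw [Finset.sum_range_succ, Nat.choose_succ_self, Nat.cast_zero, zero_mul, add_zero]
    have h6 : ∑ k ∈ Finset.range (m + 1), ((m.choose (k+1) : ℚ) + (m.choose k : ℚ)) * (dseq^[k+1] u) n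
        = (∑ k ∈ Finset.range (m + 1), (m.choose (k+1) : ℚ) * (dseq^[k+1] u) n)
          + ∑ k ∈ Finset.range (m + 1), (m.choose k : ℚ) * (dseq^[k+1] u) n := by
      rw [← Finset.sum_add_distrib]
      apply Finset.sum_congr rfl
      intro k _
      ring
    rw [h6, h5, h4]
    ring

lemma dseq_iterate_eval (p : Polynomial ℚ) (k : ℕ) :
    dseq^[k] (fun j : ℕ => p.eval (j : ℚ)) = fun n : ℕ => (dfq^[k] p).eval (n : ℚ) := by
  induction k generalizing p with
  | zero => rfl
  | succ k ih =>
    rw [Function.iterate_succ_apply, Function.iterate_succ_apply]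
    have : dseq (fun j : ℕ => p.eval (j : ℚ)) = fun j : ℕ => (dfq p).eval (j : ℚ) := by
      funext j
      rw [dfq_eval]
      show Polynomial.eval ((j+1 : ℕ) : ℚ) p - _ = _
      push_cast
      ring
    rw [this, ih]

lemma factB (a : ℂ) (n : ℕ) : ∀ k : ℕ,
    (((n + k).choose k : ℕ) : ℂ) * binomC a (n + k) = binomC (a - n) k * binomC a n := by
  intro k
  induction k with
  | zero => simp [binomC_zero]
  | succ k ih =>
    have hk : ((k : ℂ) + 1) ≠ 0 := by exact_mod_cast (Nat.succ_ne_zero k)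
    apply mul_left_cancel₀ hk
    have h1 := binomC_succ a (n + k)
    have h2 := binomC_succ (a - n) k
    have hnat : ((n + k + 1) * (n + k).choose k : ℕ) = ((n + k + 1).choose (k + 1) * (k + 1) : ℕ) :=
      Nat.add_one_mul_choose_eq (n + k) k
    have hnatC : ((n:ℂ) + k + 1) * (((n + k).choose k : ℕ) : ℂ)
        = (((n + k + 1).choose (k + 1) : ℕ) : ℂ) * ((k:ℂ) + 1) := by
      exact_mod_cast congrArg (Nat.cast : ℕ → ℂ) hnat
    push_cast at h1
    show ((k:ℂ) + 1) * ((((n + k + 1).choose (k + 1) : ℕ) : ℂ) * binomC a ((n + k) + 1)) = _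
    linear_combination binomC a ((n+k)+1) * hnatC.symm + (((n + k).choose k : ℕ) : ℂ) * h1
      + (a - n - k) * ih - binomC a n * h2

lemma newton_complex (q : Polynomial ℚ) (a : ℂ) (n : ℕ) :
    (q.map (algebraMap ℚ ℂ)).eval a
      = ∑ k ∈ Finset.range (q.natDegree + 1),
          (((dfq^[k] q).eval (n : ℚ) : ℚ) : ℂ) * binomC (a - (n : ℂ)) k := by
  set D := q.natDegree with hD
  have key := poly_eval_eq_of_nat
    (P := (q.map (algebraMap ℚ ℂ)).comp (X + C (n : ℂ)))
    (Q := ∑ k ∈ Finset.range (D + 1),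
        C (((dfq^[k] q).eval (n : ℚ) : ℚ) : ℂ) * Bpoly k) ?_ (a - (n : ℂ))
  · have hPa : ((q.map (algebraMap ℚ ℂ)).comp (X + C (n : ℂ))).eval (a - (n : ℂ))
        = (q.map (algebraMap ℚ ℂ)).eval a := by
      rw [eval_comp]
      simp
    rw [hPa] at key
    rw [key]
    simp [eval_finset_sum, Bpoly_eval]
  · intro N
    have hq_eval : ∀ x : ℚ, (q.map (algebraMap ℚ ℂ)).eval (algebraMap ℚ ℂ x)
        = algebraMap ℚ ℂ (q.eval x) := by
      intro x
      rw [eval_map, eval₂_at_apply]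
    have hcast : (N : ℂ) + (n : ℂ) = algebraMap ℚ ℂ ((n + N : ℕ) : ℚ) := by
      push_cast; ring
    have hP : ((q.map (algebraMap ℚ ℂ)).comp (X + C (n : ℂ))).eval (N : ℂ)
        = ((q.eval (((n + N : ℕ) : ℚ)) : ℚ) : ℂ) := by
      rw [eval_comp]
      simp only [eval_add, eval_X, eval_C]
      rw [hcast, hq_eval]
      simp [algebraMap]
    rw [hP]
    have hrat : q.eval (((n + N : ℕ) : ℚ))
        = ∑ k ∈ Finset.range (D + 1), (dfq^[k] q).eval (n : ℚ) * (N.choose k : ℚ) := by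
      have h1 := newton_nat (fun j : ℕ => q.eval (j : ℚ)) N n
      simp only [dseq_iterate_eval] at h1
      have h2 : ∑ k ∈ Finset.range (N + 1), (N.choose k : ℚ) * (dfq^[k] q).eval (n : ℚ)
          = ∑ k ∈ Finset.range (max N D + 1), (N.choose k : ℚ) * (dfq^[k] q).eval (n : ℚ) := by
        apply Finset.sum_subset
        · intro x hx; simp only [Finset.mem_range] at *; omega
        · intro x _ hx
          simp only [Finset.mem_range, not_lt] at hx
          rw [Nat.choose_eq_zero_of_lt (by omega), Nat.cast_zero, zero_mul]
      have h3 : ∑ k ∈ Finset.range (D + 1), (N.choose k : ℚ) * (dfq^[k] q).eval (n : ℚ)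
          = ∑ k ∈ Finset.range (max N D + 1), (N.choose k : ℚ) * (dfq^[k] q).eval (n : ℚ) := by
        apply Finset.sum_subset
        · intro x hx; simp only [Finset.mem_range] at *; omega
        · intro x _ hx
          simp only [Finset.mem_range, not_lt] at hx
          rw [dfq_iterate_zero_of_lt q x (by omega), eval_zero, mul_zero]
      rw [h1, h2, ← h3]
      apply Finset.sum_congr rfl
      intro k _
      ring
    rw [hrat]
    push_cast
    rw [eval_finset_sum]
    apply Finset.sum_congr rfl
    intro k _
    rw [eval_mul, eval_C, Bpoly_eval, binomC_natCast]
    try push_cast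
    try ring

lemma relation_complex (q : Polynomial ℚ) (a : ℂ) (hq : (Polynomial.aeval a) q = 0) (n : ℕ) :
    ∑ k ∈ Finset.range (q.natDegree + 1),
      (((dfq^[k] q).eval (n : ℚ) : ℚ) : ℂ) * (((n + k).choose k : ℕ) : ℂ) * binomC a (n + k)
      = 0 := by
  have hmap : (q.map (algebraMap ℚ ℂ)).eval a = 0 := by
    rw [eval_map]; exact hq
  have hnewton := newton_complex q a n
  rw [hmap] at hnewton
  have : ∑ k ∈ Finset.range (q.natDegree + 1),
      (((dfq^[k] q).eval (n : ℚ) : ℚ) : ℂ) * (((n + k).choose k : ℕ) : ℂ) * binomC a (n + k)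
      = (∑ k ∈ Finset.range (q.natDegree + 1),
          (((dfq^[k] q).eval (n : ℚ) : ℚ) : ℂ) * binomC (a - (n : ℂ)) k) * binomC a n := by
    rw [Finset.sum_mul]
    apply Finset.sum_congr rfl
    intro k _
    rw [mul_assoc, factB a n k, mul_assoc]
  rw [this, ← hnewton, zero_mul]

lemma dfq_zero : dfq 0 = 0 := by simp [dfq]

lemma dfq_iterate_sign (q : Polynomial ℚ) (h0 : 0 < q.leadingCoeff) :
    ∀ k, dfq^[k] q = 0 ∨ 0 < (dfq^[k] q).leadingCoeff := by
  intro k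
  induction k with
  | zero => exact Or.inr h0
  | succ k ih =>
    rw [Function.iterate_succ_apply']
    rcases ih with h | h
    · left; rw [h, dfq_zero]
    · have hne : dfq^[k] q ≠ 0 := leadingCoeff_ne_zero.mp (ne_of_gt h)
      rcases Nat.eq_zero_or_pos (dfq^[k] q).natDegree with h0' | h1
      · left; exact dfq_of_natDegree_zero _ h0'
      · right
        rw [(dfq_natDegree_eq _ hne h1).2]
        exact mul_pos (by exact_mod_cast h1) h

lemma eventually_nonneg (r : Polynomial ℚ) (h : r = 0 ∨ 0 < r.leadingCoeff) :
    ∃ n₀ : ℕ, ∀ n : ℕ, n₀ ≤ n → 0 ≤ r.eval (n : ℚ) := by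
  rcases h with rfl | hpos
  · exact ⟨0, fun n _ => by simp⟩
  rcases Nat.eq_zero_or_pos r.natDegree with h0 | h1
  · refine ⟨0, fun n _ => ?_⟩
    rw [Polynomial.eq_C_of_natDegree_eq_zero h0, eval_C]
    have : r.coeff 0 = r.leadingCoeff := by rw [Polynomial.leadingCoeff, h0]
    rw [this]; exact le_of_lt hpos
  · set R := r.map (algebraMap ℚ ℝ) with hR
    have hinj : Function.Injective (algebraMap ℚ ℝ) := (algebraMap ℚ ℝ).injective
    have hdegR : R.degree = r.degree := degree_map_eq_of_injective hinj r
    have hdeg : 0 < R.degree := by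
      rw [hdegR]
      exact Polynomial.natDegree_pos_iff_degree_pos.mp h1
    have hlcR : 0 ≤ R.leadingCoeff := by
      rw [Polynomial.leadingCoeff_map_of_injective hinj]
      have : (0:ℝ) < algebraMap ℚ ℝ r.leadingCoeff := by
        rw [show (algebraMap ℚ ℝ) r.leadingCoeff = ((r.leadingCoeff : ℚ) : ℝ) from rfl]
        exact_mod_cast hpos
      exact le_of_lt this
    have htt : Filter.Tendsto (fun x : ℝ => R.eval x) Filter.atTop Filter.atTop :=
      Polynomial.tendsto_atTop_of_leadingCoeff_nonneg R hdeg hlcR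
    have htt2 : Filter.Tendsto (fun N : ℕ => R.eval (N : ℝ)) Filter.atTop Filter.atTop :=
      htt.comp tendsto_natCast_atTop_atTop
    have hev := htt2.eventually_ge_atTop 0
    rw [Filter.eventually_atTop] at hev
    obtain ⟨n₀, hn₀⟩ := hev
    refine ⟨n₀, fun n hn => ?_⟩
    have h2 := hn₀ n hn
    have h3 : R.eval ((n : ℝ)) = ((r.eval ((n:ℚ)) : ℚ) : ℝ) := by
      rw [hR]
      have : ((n : ℝ)) = algebraMap ℚ ℝ ((n : ℚ)) := by
        simp [algebraMap]
      rw [this, eval_map, eval₂_at_apply]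
      rfl
    rw [h3] at h2
    exact_mod_cast h2

lemma greedy (w : ℕ → ℕ → ℚ) (qv : ℕ → ℚ) (hqv : ∀ m, 0 < qv m)
    (hdiag : ∀ m, w m m = qv m) (hlow : ∀ m j, j < m → w m j = 0) :
    ∀ n : ℕ, ∃ lam : ℕ → ℚ, (∀ m, 0 ≤ lam m) ∧ lam 0 = 1 ∧ (∀ m, n < m → lam m = 0) ∧
      (∀ j, 1 ≤ j → j ≤ n → 0 ≤ ∑ m ∈ Finset.range (j + 1), lam m * w m j) := by
  intro n
  induction n with
  | zero =>
    refine ⟨fun m => if m = 0 then 1 else 0, ?_, ?_, ?_, ?_⟩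
    · intro m; dsimp only; split <;> norm_num
    · simp
    · intro m hm; dsimp only; rw [if_neg (by omega)]
    · intro j h1 h2; omega
  | succ n ih =>
    obtain ⟨lam, hpos, hone, hvan, hsum⟩ := ih
    set S := ∑ m ∈ Finset.range (n + 2), lam m * w m (n + 1) with hS
    set c := max 0 (-(S / qv (n + 1))) with hc
    refine ⟨fun m => if m = n + 1 then c else lam m, ?_, ?_, ?_, ?_⟩
    · intro m
      dsimp only
      split
      · exact le_max_left _ _
      · exact hpos m
    · show (if (0:ℕ) = n + 1 then c else lam 0) = 1
      rw [if_neg (by omega)]; exact hone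
    · intro m hm
      show (if m = n + 1 then c else lam m) = 0
      rw [if_neg (by omega)]
      exact hvan m (by omega)
    · intro j h1 h2
      rcases Nat.lt_or_ge j (n + 1) with hj | hj
      · have : ∑ m ∈ Finset.range (j + 1), (if m = n + 1 then c else lam m) * w m j
            = ∑ m ∈ Finset.range (j + 1), lam m * w m j := by
          apply Finset.sum_congr rfl
          intro m hm
          rw [Finset.mem_range] at hm
          rw [if_neg (by omega)]
        rw [this]
        exact hsum j h1 (by omega)
      · have hj' : j = n + 1 := by omega
        subst hj'
        rw [Finset.sum_range_succ]
        have e1 : ∑ m ∈ Finset.range (n + 1), (if m = n + 1 then c else lam m) * w m (n + 1)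
            = ∑ m ∈ Finset.range (n + 1), lam m * w m (n + 1) := by
          apply Finset.sum_congr rfl
          intro m hm
          rw [Finset.mem_range] at hm
          rw [if_neg (by omega)]
        have e2 : S = ∑ m ∈ Finset.range (n + 1), lam m * w m (n + 1) := by
          rw [hS, Finset.sum_range_succ, hvan (n + 1) (by omega), zero_mul, add_zero]
        rw [e1, show (fun m => if m = n + 1 then c else lam m) (n+1) = c by simp, hdiag, ← e2]
        rcases le_or_gt 0 S with hS0 | hS0
        · have hcn : 0 ≤ c := le_max_left _ _
          exact add_nonneg hS0 (mul_nonneg hcn (le_of_lt (hqv _)))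
        · have hcval : c = -(S / qv (n + 1)) := by
            rw [hc]
            apply max_eq_right
            apply le_of_lt
            rw [neg_pos]
            exact div_neg_of_neg_of_pos hS0 (hqv (n + 1))
          rw [hcval]
          have heq : -(S / qv (n + 1)) * qv (n + 1) = -S := by
            rw [neg_mul, div_mul_cancel₀ _ (ne_of_gt (hqv (n + 1)))]
          rw [heq]
          linarith

/-- For any algebraic number `a` that is not a nonnegative integer, `-1 ∈ R₊(a)`, and hence
`R₊(a)` is a subring of `ℂ`. -/
theorem neg_one_mem_Rplus (a : ℂ) (halg : IsAlgebraic ℚ a) (hna : ¬ ∃ n : ℕ, a = (n : ℂ)) :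
    (-1 : ℂ) ∈ RplusSet a ∧ ∃ S : Subring ℂ, (S : Set ℂ) = RplusSet a := by
  classical
  have hint : IsIntegral ℚ a := halg.isIntegral
  set p := minpoly ℚ a with hp
  have hmonic : p.Monic := minpoly.monic hint
  have hirr : Irreducible p := minpoly.irreducible hint
  have hpeval : ∀ m : ℕ, p.eval (m : ℚ) ≠ 0 := by
    intro m hroot
    obtain ⟨u, hu⟩ := dvd_iff_isRoot.mpr hroot
    have hunit : IsUnit u := (hirr.isUnit_or_isUnit hu).resolve_left (not_isUnit_X_sub_C _)
    obtain ⟨r, hr, hru⟩ := Polynomial.isUnit_iff.mp hunit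
    have h0 : (Polynomial.aeval a) p = 0 := minpoly.aeval ℚ a
    rw [hu, ← hru, map_mul] at h0
    simp only [map_sub, aeval_X, aeval_C] at h0
    have hr0 : (algebraMap ℚ ℂ) r ≠ 0 := by
      intro h
      exact hr.ne_zero ((algebraMap ℚ ℂ).injective (by simpa using h))
    rcases mul_eq_zero.mp h0 with h | h
    · apply hna
      refine ⟨m, ?_⟩
      have := sub_eq_zero.mp h
      rw [this]
      simp
    · exact hr0 h
  set q := p * p with hq
  have hq0 : (Polynomial.aeval a) q = 0 := by rw [hq, map_mul, minpoly.aeval, mul_zero]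
  have hqlead : 0 < q.leadingCoeff := by
    have : q.Monic := hmonic.mul hmonic
    rw [Monic.leadingCoeff this]
    norm_num
  have hqpos : ∀ m : ℕ, 0 < q.eval (m : ℚ) := by
    intro m
    rw [hq, eval_mul]
    exact mul_self_pos.mpr (hpeval m)
  set D := q.natDegree with hD
  have hev : ∀ k : ℕ, ∃ n₀ : ℕ, ∀ n : ℕ, n₀ ≤ n → 0 ≤ (dfq^[k] q).eval (n : ℚ) :=
    fun k => eventually_nonneg _ (dfq_iterate_sign q hqlead k)
  choose g hg using hev
  set n₀ := (Finset.range (D + 1)).sup g with hn₀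
  have hkn : ∀ k n, n₀ ≤ n → 0 ≤ (dfq^[k] q).eval (n : ℚ) := by
    intro k n hn
    rcases le_or_gt k D with hk | hk
    · exact hg k n (le_trans (Finset.le_sup (Finset.mem_range.mpr (by omega))) hn)
    · rw [dfq_iterate_zero_of_lt q k hk, eval_zero]
  set w : ℕ → ℕ → ℚ := fun m j =>
    if m ≤ j ∧ j ≤ m + D then (dfq^[j - m] q).eval (m : ℚ) * ((j.choose (j - m) : ℕ) : ℚ)
    else 0 with hwdef
  have w_diag : ∀ m, w m m = q.eval (m : ℚ) := by
    intro m
    rw [hwdef]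
    dsimp only
    rw [if_pos ⟨le_refl m, Nat.le_add_right m D⟩]
    simp
  have w_low : ∀ m j, j < m → w m j = 0 := by
    intro m j hj; rw [hwdef]; dsimp only; rw [if_neg (by omega)]
  have w_high : ∀ m j, m + D < j → w m j = 0 := by
    intro m j hj; rw [hwdef]; dsimp only; rw [if_neg (by omega)]
  have w_nonneg : ∀ m j, n₀ ≤ m → 0 ≤ w m j := by
    intro m j hm
    rw [hwdef]; dsimp only
    split
    · exact mul_nonneg (hkn _ m hm) (by positivity)
    · exact le_refl 0
  set M := n₀ + D + 1 with hM
  -- the relation, re-indexed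
  have hrel : ∀ m, m < M → ∑ j ∈ Finset.range (M + D), ((w m j : ℚ) : ℂ) * binomC a j = 0 := by
    intro m hm
    have base := relation_complex q a hq0 m
    set emb : ℕ ↪ ℕ := ⟨fun k => m + k, add_right_injective m⟩ with hemb
    have hsub : (Finset.range (D + 1)).map emb ⊆ Finset.range (M + D) := by
      intro j hj
      rw [Finset.mem_map] at hj
      obtain ⟨k, hk, rfl⟩ := hj
      rw [Finset.mem_range] at hk ⊢
      show m + k < M + D
      omega
    have hzero : ∀ j ∈ Finset.range (M + D), j ∉ (Finset.range (D + 1)).map emb →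
        ((w m j : ℚ) : ℂ) * binomC a j = 0 := by
      intro j _ hj
      have hwz : w m j = 0 := by
        rw [hwdef]; dsimp only
        rw [if_neg]
        intro ⟨hj1, hj2⟩
        apply hj
        rw [Finset.mem_map]
        exact ⟨j - m, Finset.mem_range.mpr (by omega), by show m + (j - m) = j; omega⟩
      rw [hwz]
      simp
    rw [← Finset.sum_subset hsub hzero, Finset.sum_map]
    rw [← base]
    apply Finset.sum_congr rfl
    intro k hk
    rw [Finset.mem_range] at hk
    show ((w m (m + k) : ℚ) : ℂ) * binomC a (m + k) = _
    have hwv : w m (m + k) = (dfq^[k] q).eval (m : ℚ) * (((m + k).choose k : ℕ) : ℚ) := by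
      rw [hwdef]; dsimp only
      rw [if_pos ⟨Nat.le_add_right m k, by omega⟩]
      rw [Nat.add_sub_cancel_left]
    rw [hwv]
    push_cast
    ring
  obtain ⟨lam, hlpos, hlone, hlvan, hlsum⟩ :=
    greedy w (fun m => q.eval (m : ℚ)) hqpos w_diag w_low (n₀ + D)
  set Cc : ℕ → ℚ := fun j => ∑ m ∈ Finset.range M, lam m * w m j with hCc
  have hgrand : ∑ j ∈ Finset.range (M + D), ((Cc j : ℚ) : ℂ) * binomC a j = 0 := by
    have l1 : ∀ j, ((Cc j : ℚ) : ℂ) * binomC a j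
        = ∑ m ∈ Finset.range M, ((lam m : ℚ) : ℂ) * (((w m j : ℚ) : ℂ) * binomC a j) := by
      intro j
      rw [hCc]
      push_cast
      rw [Finset.sum_mul]
      apply Finset.sum_congr rfl
      intro m _
      ring
    have step : ∑ j ∈ Finset.range (M + D), ((Cc j : ℚ) : ℂ) * binomC a j
        = ∑ m ∈ Finset.range M, ((lam m : ℚ) : ℂ) *
            (∑ j ∈ Finset.range (M + D), ((w m j : ℚ) : ℂ) * binomC a j) :=
      calc ∑ j ∈ Finset.range (M + D), ((Cc j : ℚ) : ℂ) * binomC a j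
          = ∑ j ∈ Finset.range (M + D), ∑ m ∈ Finset.range M,
              ((lam m : ℚ) : ℂ) * (((w m j : ℚ) : ℂ) * binomC a j) :=
            Finset.sum_congr rfl (fun j _ => l1 j)
        _ = ∑ m ∈ Finset.range M, ∑ j ∈ Finset.range (M + D),
              ((lam m : ℚ) : ℂ) * (((w m j : ℚ) : ℂ) * binomC a j) := Finset.sum_comm
        _ = _ := by
            apply Finset.sum_congr rfl
            intro m _
            rw [Finset.mul_sum]
    rw [step]
    apply Finset.sum_eq_zero
    intro m hm
    rw [hrel m (Finset.mem_range.mp hm), mul_zero]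
  have hCc0 : Cc 0 = q.eval (0 : ℚ) := by
    rw [hCc]
    dsimp only
    rw [Finset.sum_eq_single_of_mem 0 (Finset.mem_range.mpr (by omega))]
    · rw [hlone, w_diag, one_mul]
      norm_num
    · intro b _ hb
      rw [w_low b 0 (by omega), mul_zero]
  have hCcnn : ∀ j, 0 ≤ Cc j := by
    intro j
    rcases Nat.eq_zero_or_pos j with rfl | hj1
    · rw [hCc0]; exact le_of_lt (hqpos 0)
    rcases le_or_gt j (n₀ + D) with hj | hj
    · have hjM : j + 1 ≤ M := by omega
      have hext : ∑ m ∈ Finset.range (j + 1), lam m * w m j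
          = ∑ m ∈ Finset.range M, lam m * w m j := by
        apply Finset.sum_subset (Finset.range_subset_range.mpr hjM)
        intro m _ hm
        rw [Finset.mem_range, not_lt] at hm
        rw [w_low m j (by omega), mul_zero]
      rw [hCc]
      dsimp only
      rw [← hext]
      exact hlsum j (by omega) hj
    · apply Finset.sum_nonneg
      intro m hm
      rw [Finset.mem_range] at hm
      by_cases hcase : n₀ ≤ m
      · exact mul_nonneg (hlpos m) (w_nonneg m j hcase)
      · rw [w_high m j (by omega), mul_zero]
  have hCc0pos : 0 < Cc 0 := by rw [hCc0]; exact hqpos 0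
  -- clear denominators
  set dd : ℕ := ∏ j ∈ Finset.range (M + D), (Cc j).den with hdd
  have hddpos : 0 < dd := Finset.prod_pos (fun j _ => (Cc j).pos)
  have hnat' : ∀ j, ∃ nz : ℕ, j ∈ Finset.range (M + D) → (nz : ℚ) = (dd : ℚ) * Cc j := by
    intro j
    by_cases hj : j ∈ Finset.range (M + D)
    · obtain ⟨e, he⟩ := Finset.dvd_prod_of_mem (fun j => (Cc j).den) hj
      have h1 : ((Cc j).den : ℚ) * Cc j = ((Cc j).num : ℚ) := by
        rw [mul_comm]
        exact Rat.mul_den_eq_num (Cc j)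
      have h2 : (dd : ℚ) * Cc j = ((Cc j).num * e : ℤ) := by
        rw [hdd, he]
        push_cast
        rw [mul_comm ((Cc j).den : ℚ) (e : ℚ), mul_assoc, h1]
        ring
      have hz0 : (0 : ℤ) ≤ (Cc j).num * e := by
        have : (0 : ℚ) ≤ (dd : ℚ) * Cc j :=
          mul_nonneg (by positivity) (hCcnn j)
        rw [h2] at this
        exact_mod_cast this
      refine ⟨((Cc j).num * e).toNat, fun _ => ?_⟩
      rw [h2]
      exact_mod_cast congrArg (Int.cast : ℤ → ℚ) (Int.toNat_of_nonneg hz0)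
    · exact ⟨0, fun h => absurd h hj⟩
  choose nc hnc using hnat'
  have hnc0 : 1 ≤ nc 0 := by
    have h := hnc 0 (Finset.mem_range.mpr (by omega))
    have hpos' : (0 : ℚ) < (dd : ℚ) * Cc 0 := by
      apply mul_pos _ hCc0pos
      exact_mod_cast hddpos
    rw [← h] at hpos'
    have : 0 < nc 0 := by exact_mod_cast hpos'
    omega
  have hfinal : ∑ j ∈ Finset.range (M + D), ((nc j : ℕ) : ℂ) * binomC a j = 0 := by
    have step : ∑ j ∈ Finset.range (M + D), ((nc j : ℕ) : ℂ) * binomC a j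
        = (dd : ℂ) * ∑ j ∈ Finset.range (M + D), ((Cc j : ℚ) : ℂ) * binomC a j := by
      rw [Finset.mul_sum]
      apply Finset.sum_congr rfl
      intro j hj
      have h := hnc j hj
      have hcast : ((nc j : ℕ) : ℂ) = (dd : ℂ) * ((Cc j : ℚ) : ℂ) := by
        calc ((nc j : ℕ) : ℂ) = (((nc j : ℕ) : ℚ) : ℂ) := by norm_cast
          _ = (((dd : ℚ) * Cc j : ℚ) : ℂ) := by rw [h]
          _ = (dd : ℂ) * ((Cc j : ℚ) : ℂ) := by push_cast; ring
      rw [hcast, mul_assoc]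
    rw [step, hgrand, mul_zero]
  -- extract -1 membership
  set K := M + D with hK
  have hK1 : 1 ≤ K := by omega
  have hsplit : ∑ j ∈ Finset.range K, ((nc j : ℕ) : ℂ) * binomC a j
      = ((nc 0 : ℕ) : ℂ) * binomC a 0
        + ∑ j ∈ Finset.range (K - 1), ((nc (j + 1) : ℕ) : ℂ) * binomC a (j + 1) := by
    conv_lhs => rw [show K = (K - 1) + 1 by omega]
    rw [Finset.sum_range_succ']
    ring
  have hmem : (-1 : ℂ) ∈ RplusSet a := by
    have elem_mem : (nc 0 - 1) • binomC a 0
        + ∑ j ∈ Finset.range (K - 1), nc (j + 1) • binomC a (j + 1)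
        ∈ AddSubmonoid.closure (Set.range (binomC a)) := by
      apply AddSubmonoid.add_mem
      · exact AddSubmonoid.nsmul_mem (S := AddSubmonoid.closure (Set.range (binomC a)))
          (AddSubmonoid.subset_closure (Set.mem_range_self 0)) _
      · apply AddSubmonoid.sum_mem
        intro j _
        exact AddSubmonoid.nsmul_mem (S := AddSubmonoid.closure (Set.range (binomC a)))
          (AddSubmonoid.subset_closure (Set.mem_range_self (j + 1))) _
    have hval : (nc 0 - 1) • binomC a 0
        + ∑ j ∈ Finset.range (K - 1), nc (j + 1) • binomC a (j + 1) = (-1 : ℂ) := by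
      have e1 : (nc 0 - 1) • binomC a 0 = ((nc 0 : ℂ) - 1) * binomC a 0 := by
        rw [nsmul_eq_mul]
        congr 1
        push_cast [Nat.cast_sub hnc0]
        ring
      have e2 : ∑ j ∈ Finset.range (K - 1), nc (j + 1) • binomC a (j + 1)
          = ∑ j ∈ Finset.range (K - 1), ((nc (j + 1) : ℕ) : ℂ) * binomC a (j + 1) := by
        apply Finset.sum_congr rfl
        intro j _
        rw [nsmul_eq_mul]
      rw [e1, e2, binomC_zero]
      have hfromfinal : ((nc 0 : ℕ) : ℂ) * 1
          + ∑ j ∈ Finset.range (K - 1), ((nc (j + 1) : ℕ) : ℂ) * binomC a (j + 1) = 0 := by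
        rw [← binomC_zero a, ← hsplit]
        exact hfinal
      linear_combination hfromfinal
    rw [← hval]
    exact elem_mem
  refine ⟨hmem, ⟨{ carrier := RplusSet a
                   zero_mem' := AddSubmonoid.zero_mem _
                   add_mem' := fun hx hy => AddSubmonoid.add_mem _ hx hy
                   one_mem' := (by
                     have hg0 := mem_Rplus_of_gen a 0
                     rwa [binomC_zero] at hg0)
                   mul_mem' := fun hx hy => Rplus_mul_mem a hx hy
                   neg_mem' := fun {x} hx => by
                     have h := Rplus_mul_mem a hmem hx
                     rwa [neg_one_mul] at h }, rfl⟩⟩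
end

section
/- Let K be a number field and S a subring of K containing the ring of integers O_K. If some element x of S has negative valuation v_p(x) < 0 at a prime ideal p of O_K, then the fractional ideal p^{-1} is contained in S. -/
open IsDedekindDomain

/-- If `S` is an overring of the ring of integers of a number field `K`, and some `x ∈ S` has
negative valuation at a prime ideal `v` (i.e. multiplicative valuation `> 1`), then the inverse
fractional ideal `v⁻¹ = {y ∈ K ∣ y·v ⊆ O_K}` is contained in `S`. -/
theorem inv_prime_ideal_subset_overring (K : Type*) [Field K] [NumberField K]
    (S : Subring K) (hS : ∀ x : K, IsIntegral ℤ x → x ∈ S)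
    (v : HeightOneSpectrum (NumberField.RingOfIntegers K))
    (x : K) (hx : x ∈ S) (hneg : 1 < v.valuation K x) :
    ∀ y : K, (∀ z : NumberField.RingOfIntegers K, z ∈ v.asIdeal → IsIntegral ℤ (y * (z : K))) →
      y ∈ S := by
  intro y hy
  set R := NumberField.RingOfIntegers K with hR
  letI : IsFractionRing R K := inferInstance
  -- the denominator ideal of x
  let I : Ideal R :=
    { carrier := {a | ∃ b : R, algebraMap R K b = algebraMap R K a * x},
      add_mem' := by
        rintro a a' ⟨b, hb⟩ ⟨b', hb'⟩
        exact ⟨b + b', by rw [map_add, map_add, hb, hb', add_mul]⟩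
      zero_mem' := ⟨0, by simp⟩
      smul_mem' := by
        rintro c a ⟨b, hb⟩
        refine ⟨c * b, ?_⟩
        rw [smul_eq_mul, map_mul, map_mul, hb]
        ring }
  have memI : ∀ a : R, a ∈ I ↔ ∃ b : R, algebraMap R K b = algebraMap R K a * x :=
    fun a => Iff.rfl
  -- I is contained in v.asIdeal
  have hIp : ∀ a : R, a ∈ I → a ∈ v.asIdeal := by
    intro a ha
    obtain ⟨b, hb⟩ := ha
    have hle : v.valuation K (algebraMap R K a) * v.valuation K x ≤ 1 := by
      rw [← Valuation.map_mul, ← hb]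
      exact v.valuation_le_one b
    have hlt : v.valuation K (algebraMap R K a) < 1 := by
      by_contra h
      push_neg at h
      have : (1 : WithZero (Multiplicative ℤ)) * v.valuation K x ≤
          v.valuation K (algebraMap R K a) * v.valuation K x := mul_le_mul_left h _
      rw [one_mul] at this
      exact absurd (le_trans this hle) (not_le.mpr hneg)
    have := (v.valuation_lt_one_iff_dvd a).mp hlt
    exact Ideal.dvd_span_singleton.mp this
  -- I is nonzero
  have hI0 : I ≠ ⊥ := by
    obtain ⟨d, hd⟩ := IsLocalization.exists_integer_multiple (nonZeroDivisors R) x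
    intro h
    have hdI : (d : R) ∈ I := by
      obtain ⟨b, hb⟩ := hd
      exact ⟨b, by simpa [Algebra.smul_def] using hb⟩
    rw [h] at hdI
    exact nonZeroDivisors.coe_ne_zero d (by simp at hdI)
  -- there is a ∈ I with x * a ∉ p (mod p)
  have key : ∃ a ∈ I, ∃ b : R, algebraMap R K a * x = algebraMap R K b ∧ b ∉ v.asIdeal := by
    by_contra H
    push_neg at H
    have hp0 : (v.asIdeal : FractionalIdeal (nonZeroDivisors R) K) ≠ 0 :=
      FractionalIdeal.coeIdeal_ne_zero.mpr v.ne_bot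
    have hIF0 : (I : FractionalIdeal (nonZeroDivisors R) K) ≠ 0 :=
      FractionalIdeal.coeIdeal_ne_zero.mpr hI0
    have h1 : (I : FractionalIdeal (nonZeroDivisors R) K) * (v.asIdeal : FractionalIdeal (nonZeroDivisors R) K)⁻¹
        ≤ (I : FractionalIdeal (nonZeroDivisors R) K) := by
      rw [FractionalIdeal.mul_le]
      intro i hi j hj
      obtain ⟨a, haI, rfl⟩ := (FractionalIdeal.mem_coeIdeal _).mp hi
      -- i * j is integral since a ∈ p
      have hap : algebraMap R K a ∈ (v.asIdeal : FractionalIdeal (nonZeroDivisors R) K) :=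
        (FractionalIdeal.mem_coeIdeal _).mpr ⟨a, hIp a haI, rfl⟩
      have hij : j * algebraMap R K a ∈ (1 : FractionalIdeal (nonZeroDivisors R) K) :=
        (FractionalIdeal.mem_inv_iff hp0).mp hj _ hap
      obtain ⟨r, hr⟩ := (FractionalIdeal.mem_one_iff _).mp hij
      -- show r ∈ I
      obtain ⟨b, hb⟩ := (memI a).mp haI
      have hbmem := H a haI b hb.symm
      have hbF : algebraMap R K b ∈ (v.asIdeal : FractionalIdeal (nonZeroDivisors R) K) :=
        (FractionalIdeal.mem_coeIdeal _).mpr ⟨b, hbmem, rfl⟩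
      have hjb : j * algebraMap R K b ∈ (1 : FractionalIdeal (nonZeroDivisors R) K) :=
        (FractionalIdeal.mem_inv_iff hp0).mp hj _ hbF
      obtain ⟨s, hs⟩ := (FractionalIdeal.mem_one_iff _).mp hjb
      refine (FractionalIdeal.mem_coeIdeal _).mpr ⟨r, ?_, by rw [hr]; ring⟩
      refine (memI r).mpr ⟨s, ?_⟩
      rw [hs, hr, hb]
      ring
    -- multiply by I⁻¹ : p⁻¹ ≤ 1
    have h2 : ((v.asIdeal : FractionalIdeal (nonZeroDivisors R) K))⁻¹ ≤ 1 := by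
      calc ((v.asIdeal : FractionalIdeal (nonZeroDivisors R) K))⁻¹
          = (I : FractionalIdeal (nonZeroDivisors R) K)⁻¹ *
            ((I : FractionalIdeal (nonZeroDivisors R) K) * (v.asIdeal : FractionalIdeal (nonZeroDivisors R) K)⁻¹) := by
            rw [← mul_assoc, mul_comm _ (I : FractionalIdeal (nonZeroDivisors R) K),
              mul_inv_cancel₀ hIF0, one_mul]
        _ ≤ (I : FractionalIdeal (nonZeroDivisors R) K)⁻¹ * (I : FractionalIdeal (nonZeroDivisors R) K) :=
            mul_right_mono h1
        _ = 1 := by rw [mul_comm, mul_inv_cancel₀ hIF0]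
    have h3 : (1 : FractionalIdeal (nonZeroDivisors R) K) ≤ (v.asIdeal : FractionalIdeal (nonZeroDivisors R) K) := by
      calc (1 : FractionalIdeal (nonZeroDivisors R) K)
          = (v.asIdeal : FractionalIdeal (nonZeroDivisors R) K) *
            ((v.asIdeal : FractionalIdeal (nonZeroDivisors R) K))⁻¹ :=
            (mul_inv_cancel₀ hp0).symm
        _ ≤ (v.asIdeal : FractionalIdeal (nonZeroDivisors R) K) * 1 := mul_right_mono h2
        _ = _ := mul_one _
    have : (⊤ : Ideal R) ≤ v.asIdeal := by
      rw [← FractionalIdeal.coeIdeal_le_coeIdeal K, FractionalIdeal.coeIdeal_top]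
      exact h3
    exact v.isPrime.ne_top (top_le_iff.mp this)
  obtain ⟨a, haI, b, hab, hbp⟩ := key
  -- b is invertible mod p
  have hmax : v.asIdeal.IsMaximal := Ideal.IsPrime.isMaximal v.isPrime v.ne_bot
  obtain ⟨c, i, hip, hci⟩ := hmax.exists_inv hbp
  set t : R := c * a with ht
  have htI : t ∈ I := I.mul_mem_left c haI
  have htp : t ∈ v.asIdeal := hIp t htI
  have hxt : x * algebraMap R K t = 1 - algebraMap R K i := by
    have : algebraMap R K (c * b + i) = algebraMap R K 1 := by rw [hci]
    rw [map_add, map_mul, map_one] at this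
    rw [ht, map_mul]
    calc x * (algebraMap R K c * algebraMap R K a)
        = algebraMap R K c * (algebraMap R K a * x) := by ring
      _ = algebraMap R K c * algebraMap R K b := by rw [hab]
      _ = 1 - algebraMap R K i := by linear_combination this
  have hyt : y * (algebraMap R K t) ∈ S := hS _ (hy t htp)
  have hyi : y * (algebraMap R K i) ∈ S := hS _ (hy i hip)
  have hfin : y = x * (y * algebraMap R K t) + y * algebraMap R K i := by
    linear_combination (-y) * hxt
  rw [hfin]
  exact S.add_mem (S.mul_mem hx hyt) hyi
end

section
/- Let K be a number field and S a subring of K containing O_K. Let Q be the set of prime ideals q of O_K such that every element of S has nonnegative q-adic valuation. Then S equals the set of all x in K with v_q(x) >= 0 for every q in Q. -/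
open IsDedekindDomain

open IsDedekindDomain.HeightOneSpectrum in
/-- Auxiliary: if `x : K` has `v`-adic valuation at most one, then `x` can be written as a
fraction `a / d` with `d` not in the prime ideal corresponding to `v`. -/
theorem exists_denom_not_mem_of_valuation_le_one {R K : Type*} [CommRing R] [IsDedekindDomain R]
    [Field K] [Algebra R K] [IsFractionRing R K] (v : HeightOneSpectrum R) {x : K}
    (hx : v.valuation K x ≤ 1) :
    ∃ a d : R, d ∉ v.asIdeal ∧ algebraMap R K d * x = algebraMap R K a := by
  haveI hp : v.asIdeal.IsPrime := v.isPrime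
  by_cases hx0 : x = 0
  · exact ⟨0, 1, fun h => hp.ne_top (Ideal.eq_top_of_isUnit_mem _ h isUnit_one), by simp [hx0]⟩
  have hle : v.asIdeal.primeCompl ≤ nonZeroDivisors R :=
    v.asIdeal.primeCompl_le_nonZeroDivisors
  set B := Localization.subalgebra K v.asIdeal.primeCompl hle with hB
  haveI hloc : IsLocalization v.asIdeal.primeCompl B :=
    Localization.subalgebra.isLocalization_subalgebra K _ hle
  haveI : IsDiscreteValuationRing B :=
    IsLocalization.AtPrime.isDiscreteValuationRing_of_dedekind_domain R v.ne_bot B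
  haveI : IsFractionRing B K := Localization.subalgebra.isFractionRing K _ hle
  have mem_iff : ∀ r : R, v.valuation K (algebraMap R K r) < 1 ↔ r ∈ v.asIdeal := by
    intro r
    rw [valuation_lt_one_iff_dvd, Ideal.dvd_span_singleton]
  rcases ValuationRing.isInteger_or_isInteger B x with ⟨y, hy⟩ | ⟨y, hy⟩
  · obtain ⟨⟨a, d⟩, had⟩ := IsLocalization.surj v.asIdeal.primeCompl y
    refine ⟨a, d, d.2, ?_⟩
    have h := congrArg (algebraMap B K) had
    rw [map_mul, hy] at h
    simp only [← IsScalarTower.algebraMap_apply R B K] at h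
    rw [mul_comm]
    exact h
  · obtain ⟨⟨a, d⟩, had⟩ := IsLocalization.surj v.asIdeal.primeCompl y
    have h : x⁻¹ * algebraMap R K d = algebraMap R K a := by
      have h := congrArg (algebraMap B K) had
      rw [map_mul, hy] at h
      simp only [← IsScalarTower.algebraMap_apply R B K] at h
      exact h
    by_cases ha : a ∈ v.asIdeal
    · exfalso
      have hd1 : v.valuation K (algebraMap R K (d : R)) = 1 :=
        le_antisymm (v.valuation_le_one (K := K) d) (not_lt.mp (fun hlt => d.2 ((mem_iff _).mp hlt)))
      have ha1 : v.valuation K (algebraMap R K a) < 1 := (mem_iff a).mpr ha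
      have hval : v.valuation K x⁻¹ < 1 := by
        have := congrArg (v.valuation K) h
        rw [map_mul, hd1, mul_one] at this
        rw [this]
        exact ha1
      have : (1 : WithZero (Multiplicative ℤ)) ≤ v.valuation K x⁻¹ := (Valuation.val_le_one_iff (v.valuation K) hx0).mp hx
      exact absurd hval (not_lt.mpr this)
    · refine ⟨d, a, ha, ?_⟩
      have := congrArg (x * ·) h
      simp only [← mul_assoc, mul_inv_cancel₀ hx0, one_mul] at this
      rw [mul_comm] at this
      exact this.symm

open IsDedekindDomain.HeightOneSpectrum in
/-- An overring `S` of the ring of integers of a number field `K` equals the set of elements of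
`K` with nonnegative valuation (multiplicative valuation `≤ 1`) at every prime ideal `v` at which
all of `S` has nonnegative valuation. -/
theorem overring_eq_valuation_description (K : Type*) [Field K] [NumberField K]
    (S : Subring K) (hS : ∀ x : K, IsIntegral ℤ x → x ∈ S) :
    (S : Set K) = {x : K |
      ∀ v : HeightOneSpectrum (NumberField.RingOfIntegers K),
        (∀ s ∈ S, v.valuation K s ≤ 1) → v.valuation K x ≤ 1} := by
  set R := NumberField.RingOfIntegers K with hR
  have hmem : ∀ r : R, algebraMap R K r ∈ S := fun r =>
    hS _ (NumberField.RingOfIntegers.isIntegral_coe r)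
  let f : R →+* S :=
  { toFun := fun r => ⟨algebraMap R K r, hmem r⟩
    map_one' := by ext; simp
    map_mul' := fun x y => by ext; simp
    map_zero' := by ext; simp
    map_add' := fun x y => by ext; simp }
  have hf : ∀ r : R, ((f r : S) : K) = algebraMap R K r := fun r => rfl
  ext x
  simp only [SetLike.mem_coe, Set.mem_setOf_eq]
  refine ⟨fun hx v hv => hv x hx, fun hx => ?_⟩
  by_contra hxS
  let I : Ideal S :=
  { carrier := {s : S | (s : K) * x ∈ S}
    add_mem' := fun {a b} ha hb => by
      simp only [Set.mem_setOf_eq, Subring.coe_add, add_mul] at *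
      exact S.add_mem ha hb
    zero_mem' := by simp only [Set.mem_setOf_eq, ZeroMemClass.coe_zero, zero_mul]; exact S.zero_mem
    smul_mem' := fun c s hs => by
      simp only [Set.mem_setOf_eq, smul_eq_mul, Subring.coe_mul, mul_assoc] at *
      exact S.mul_mem c.2 hs }
  have hmemI : ∀ s : S, s ∈ I ↔ (s : K) * x ∈ S := fun s => Iff.rfl
  have hI_ne_top : I ≠ ⊤ := by
    intro h
    have h1 : (1 : S) ∈ I := h ▸ Submodule.mem_top
    rw [hmemI] at h1
    simp only [OneMemClass.coe_one, one_mul] at h1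
    exact hxS h1
  obtain ⟨M, hM, hIM⟩ := Ideal.exists_le_maximal I hI_ne_top
  obtain ⟨a0, b0, hb0, hx0eq⟩ := IsFractionRing.div_surjective (A := R) x
  have hb0K : algebraMap R K b0 ≠ 0 :=
    IsFractionRing.to_map_ne_zero_of_mem_nonZeroDivisors hb0
  have hfb0I : f b0 ∈ I := by
    rw [hmemI, hf, ← hx0eq, mul_div_cancel₀ _ hb0K]
    exact hmem a0
  haveI : M.IsPrime := hM.isPrime
  set p : Ideal R := M.comap f with hp
  have hp_ne_bot : p ≠ ⊥ := by
    intro h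
    have hb0p : b0 ∈ p := Ideal.mem_comap.mpr (hIM hfb0I)
    rw [h, Ideal.mem_bot] at hb0p
    exact nonZeroDivisors.ne_zero hb0 hb0p
  let v : HeightOneSpectrum R := ⟨p, Ideal.IsPrime.comap f, hp_ne_bot⟩
  have mem_iff : ∀ r : R, v.valuation K (algebraMap R K r) < 1 ↔ r ∈ p := by
    intro r
    rw [valuation_lt_one_iff_dvd, Ideal.dvd_span_singleton]
  have hv : ∀ s ∈ S, v.valuation K s ≤ 1 := by
    intro s hs
    by_contra hcon
    push_neg at hcon
    have hs0 : s ≠ 0 := by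
      rintro rfl
      simp only [map_zero] at hcon
      exact absurd hcon (by simp)
    have hsinv : v.valuation K s⁻¹ ≤ 1 :=
      (Valuation.val_le_one_iff (v.valuation K) (inv_ne_zero hs0)).mpr
        (by rw [inv_inv]; exact hcon.le)
    obtain ⟨a, d, hd, heq⟩ := exists_denom_not_mem_of_valuation_le_one v hsinv
    have h2 : algebraMap R K d = algebraMap R K a * s := by
      have := congrArg (· * s) heq
      simp only [mul_assoc, inv_mul_cancel₀ hs0, mul_one] at this
      exact this
    have hvd : v.valuation K (algebraMap R K d) = 1 :=
      le_antisymm (v.valuation_le_one (K := K) d) (not_lt.mp (fun hlt => hd ((mem_iff d).mp hlt)))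
    have hmul : v.valuation K (algebraMap R K a) * v.valuation K s = 1 := by
      rw [← Valuation.map_mul, ← h2, hvd]
    have hap : a ∈ p := by
      rw [← mem_iff]
      by_contra hge
      push_neg at hge
      have : v.valuation K s ≤ 1 := by
        calc v.valuation K s = 1 * v.valuation K s := (one_mul _).symm
          _ ≤ v.valuation K (algebraMap R K a) * v.valuation K s := mul_le_mul_left hge _
          _ = 1 := hmul
      exact absurd this (not_le.mpr hcon)
    have hfa : f a ∈ M := Ideal.mem_comap.mp hap
    have hfd : f d ∈ M := by
      have hfd_eq : f d = f a * ⟨s, hs⟩ := Subtype.ext (by rw [hf]; exact h2)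
      rw [hfd_eq]
      exact M.mul_mem_right _ hfa
    exact hd (Ideal.mem_comap.mpr hfd)
  obtain ⟨c, d, hd, heq⟩ := exists_denom_not_mem_of_valuation_le_one v (hx v hv)
  have hfdI : f d ∈ I := by
    rw [hmemI, hf, heq]
    exact hmem c
  exact hd (Ideal.mem_comap.mpr (hIM hfdI))
end

section
/- Let a be an algebraic integer and p a prime. If z is a root of the minimal polynomial of a in the p-adic integers Z_p, and P is the corresponding prime ideal of O_{Q(a)} above p (with ramification index 1 and residue degree 1), then for every k >= 0 the P-adic valuation of binom(a,k) is nonnegative. -/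
open Finset

lemma descPochhammer_eval_eq_prod_range' {R : Type*} [CommRing R] (k : ℕ) (x : R) :
    (descPochhammer R k).eval x = ∏ i ∈ Finset.range k, (x - i) := by
  induction k with
  | zero => simp
  | succ n ih => rw [descPochhammer_succ_eval, prod_range_succ, ih]

/-- Let `a` be an algebraic integer and `p` a prime. A root `z ∈ ℤ_p` of the minimal polynomial
of `a` determines (via the corresponding embedding `φ : ℚ(a) → ℚ_p`, `φ(a) = z`) a prime ideal
`P` of `O_{ℚ(a)}` above `p` with ramification index `1` and residue degree `1`, whose valuation
is `v_P = v_p ∘ φ`. Then for every `k ≥ 0` the `P`-adic valuation of `binom(a,k)` is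
nonnegative, i.e. `‖φ(binom(a,k))‖_p ≤ 1`. -/
theorem binom_valuation_nonneg (p : ℕ) [Fact p.Prime] (a : ℂ) (ha : IsIntegral ℤ a)
    (z : ℤ_[p]) (hz : Polynomial.aeval z (minpoly ℤ a) = 0)
    (φ : (IntermediateField.adjoin ℚ ({a} : Set ℂ)) →+* ℚ_[p])
    (hφ : φ ⟨a, IntermediateField.mem_adjoin_simple_self ℚ a⟩ = (z : ℚ_[p])) (k : ℕ) :
    ‖φ ((∏ i ∈ Finset.range k,
          ((⟨a, IntermediateField.mem_adjoin_simple_self ℚ a⟩ :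
              IntermediateField.adjoin ℚ ({a} : Set ℂ)) - (i : _))) /
        (k.factorial : _))‖ ≤ 1 := by
  have hfac : (k.factorial : ℚ_[p]) ≠ 0 := Nat.cast_ne_zero.mpr k.factorial_ne_zero
  have hmap : φ ((∏ i ∈ Finset.range k,
          ((⟨a, IntermediateField.mem_adjoin_simple_self ℚ a⟩ :
              IntermediateField.adjoin ℚ ({a} : Set ℂ)) - (i : _))) /
        (k.factorial : _)) =
      (((∏ i ∈ Finset.range k, (z - (i : ℤ_[p])) : ℤ_[p]) : ℚ_[p])) / (k.factorial : ℚ_[p]) := by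
    rw [map_div₀, map_natCast, map_prod]
    congr 1
    have : ((∏ i ∈ Finset.range k, (z - (i : ℤ_[p])) : ℤ_[p]) : ℚ_[p])
        = ∏ i ∈ Finset.range k, ((z : ℚ_[p]) - (i : ℚ_[p])) := by
      rw [show ((∏ i ∈ Finset.range k, (z - (i : ℤ_[p])) : ℤ_[p]) : ℚ_[p])
          = PadicInt.Coe.ringHom (∏ i ∈ Finset.range k, (z - (i : ℤ_[p]))) from rfl,
        map_prod]
      exact Finset.prod_congr rfl fun i _ => by
        rw [map_sub, map_natCast]; rfl
    rw [this]
    exact Finset.prod_congr rfl fun i _ => by rw [map_sub, hφ, map_natCast]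
  rw [hmap, norm_div, div_le_one (by simpa using hfac)]
  have key : ‖(descPochhammer ℤ_[p] k).eval z‖ ≤ ‖(k.factorial : ℤ_[p])‖ := by
    rw [descPochhammer_eval_eq_ascPochhammer]
    exact PadicInt.norm_ascPochhammer_le k _
  rw [descPochhammer_eval_eq_prod_range'] at key
  calc ‖((∏ i ∈ Finset.range k, (z - (i : ℤ_[p])) : ℤ_[p]) : ℚ_[p])‖
      = ‖(∏ i ∈ Finset.range k, (z - (i : ℤ_[p])) : ℤ_[p])‖ := rfl
    _ ≤ ‖(k.factorial : ℤ_[p])‖ := key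
    _ = ‖(k.factorial : ℚ_[p])‖ := by rw [← PadicInt.coe_natCast, PadicInt.norm_def]
end
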